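/- arXiv:2003.05912 — 6 statements merged into one kernel-verified Lean document; each statement's English description precedes it below -/
import Mathlib

section
/- (Proposition 2) Let G := -F be the backward-time vector field of ẋ = F(x, w), and suppose G is mixed-monotone with respect to a decomposition function D. Let (a, â) : [0, T] → ℝⁿ × ℝⁿ be a solution of the embedding ODE (ȧ, ȧ̂) = E(a, â) := (D(a, w̲, â, w̄), D(â, w̄, a, w̲)). If x₀ ∈ ℝⁿ is such that there exists a piecewise continuous w : [0, T] → 𝒲 and a solution x : [0, T] → ℝⁿ of ẋ = F(x, w(t)) with x(0) = x₀ and a(0) ⪯ x(T) ⪯ â(0), then a(T) ⪯ x₀ ⪯ â(T). Equivalently, the backward reachable set S^F(T; [a(0), â(0)]) of initial conditions that can be driven into [a(0), â(0)] in time T is contained in the hyperrectangle [a(T), â(T)]. -/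
open Set Function Filter Topology

/-- A function is piecewise continuous on a set `s` if it is continuous on `s` off of
finitely many points. -/
def PiecewiseContinuousOn {α : Type*} [TopologicalSpace α] (w : ℝ → α) (s : Set ℝ) : Prop :=
  ∃ E : Finset ℝ, ContinuousOn w (s \ (E : Set ℝ))

/-- `d` is a decomposition function for the vector field `F` on state space `ℝⁿ` with
disturbance set `𝒲 = Set.Icc wl wu ⊆ ℝᵐ`:  `d` is locally Lipschitz, agrees with `F` on the
diagonal, `dᵢ` is nondecreasing in `xⱼ` for `j ≠ i`, nonincreasing in every component of `x̂`,
nondecreasing in every component of `w` and nonincreasing in every component of `ŵ`. -/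
def IsDecompositionFunction {n m : ℕ} (wl wu : Fin m → ℝ)
    (F : (Fin n → ℝ) → (Fin m → ℝ) → (Fin n → ℝ))
    (d : (Fin n → ℝ) → (Fin m → ℝ) → (Fin n → ℝ) → (Fin m → ℝ) → (Fin n → ℝ)) : Prop :=
  LocallyLipschitz
      (fun p : ((Fin n → ℝ) × (Fin m → ℝ)) × ((Fin n → ℝ) × (Fin m → ℝ)) =>
        d p.1.1 p.1.2 p.2.1 p.2.2)
    ∧ (∀ x : Fin n → ℝ, ∀ w ∈ Set.Icc wl wu, d x w x w = F x w)
    ∧ (∀ (i j : Fin n), j ≠ i → ∀ (x xh : Fin n → ℝ) (s t : ℝ), s ≤ t →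
        ∀ w ∈ Set.Icc wl wu, ∀ wh ∈ Set.Icc wl wu,
          d (Function.update x j s) w xh wh i ≤ d (Function.update x j t) w xh wh i)
    ∧ (∀ (i j : Fin n) (x xh : Fin n → ℝ) (s t : ℝ), s ≤ t →
        ∀ w ∈ Set.Icc wl wu, ∀ wh ∈ Set.Icc wl wu,
          d x w (Function.update xh j t) wh i ≤ d x w (Function.update xh j s) wh i)
    ∧ (∀ (i : Fin n) (k : Fin m) (x xh : Fin n → ℝ) (s t : ℝ),
        wl k ≤ s → s ≤ t → t ≤ wu k →
        ∀ w ∈ Set.Icc wl wu, ∀ wh ∈ Set.Icc wl wu,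
          d x (Function.update w k s) xh wh i ≤ d x (Function.update w k t) xh wh i)
    ∧ (∀ (i : Fin n) (k : Fin m) (x xh : Fin n → ℝ) (s t : ℝ),
        wl k ≤ s → s ≤ t → t ≤ wu k →
        ∀ w ∈ Set.Icc wl wu, ∀ wh ∈ Set.Icc wl wu,
          d x w xh (Function.update wh k t) i ≤ d x w xh (Function.update wh k s) i)


section AuxHelpers

lemma locallyLipschitz_compact {X Y : Type*} [MetricSpace X] [MetricSpace Y] {f : X → Y}
    (hf : LocallyLipschitz f) {s : Set X} (hs : IsCompact s) :
    ∃ C : ℝ, 0 ≤ C ∧ ∀ p ∈ s, ∀ q ∈ s, dist (f p) (f q) ≤ C * dist p q := by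
  by_contra h
  push_neg at h
  have hseq : ∀ k : ℕ, ∃ pq : X × X, pq.1 ∈ s ∧ pq.2 ∈ s ∧
      (k : ℝ) * dist pq.1 pq.2 < dist (f pq.1) (f pq.2) := by
    intro k
    obtain ⟨p, hp, q, hq, h'⟩ := h (k : ℝ) (Nat.cast_nonneg k)
    exact ⟨(p, q), hp, hq, h'⟩
  choose u hu1 hu2 hu3 using hseq
  obtain ⟨z, hz, φ, hφ, hconv⟩ := (hs.prod hs).tendsto_subseq (fun k => ⟨hu1 k, hu2 k⟩)
  have h1 : Tendsto (fun k => (u (φ k)).1) atTop (𝓝 z.1) :=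
    (continuous_fst.tendsto z).comp hconv
  have h2 : Tendsto (fun k => (u (φ k)).2) atTop (𝓝 z.2) :=
    (continuous_snd.tendsto z).comp hconv
  have hφtop : Tendsto (fun k => ((φ k : ℕ) : ℝ)) atTop atTop :=
    tendsto_natCast_atTop_atTop.comp hφ.tendsto_atTop
  by_cases hzz : z.1 = z.2
  · obtain ⟨K, t, ht, hlip⟩ := hf z.1
    obtain ⟨r, hr, hball⟩ := Metric.mem_nhds_iff.1 ht
    have hev1 : ∀ᶠ k in atTop, (u (φ k)).1 ∈ Metric.ball z.1 r :=
      h1 (Metric.ball_mem_nhds z.1 hr)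
    have hev2 : ∀ᶠ k in atTop, (u (φ k)).2 ∈ Metric.ball z.1 r := by
      have : Metric.ball z.1 r ∈ 𝓝 z.2 := by
        rw [← hzz]; exact Metric.ball_mem_nhds z.1 hr
      exact h2 this
    have hev3 : ∀ᶠ k in atTop, (K : ℝ) < ((φ k : ℕ) : ℝ) := hφtop.eventually_gt_atTop _
    obtain ⟨k, hk1, hk2, hk3⟩ := (hev1.and (hev2.and hev3)).exists
    have hlipk := hlip.dist_le_mul _ (hball hk1) _ (hball hk2)
    have hd0 : 0 < dist (u (φ k)).1 (u (φ k)).2 := by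
      rcases (dist_nonneg (x := (u (φ k)).1) (y := (u (φ k)).2)).lt_or_eq with h' | h'
      · exact h'
      · exfalso
        have := hu3 (φ k)
        rw [← h'] at this
        have heq : (u (φ k)).1 = (u (φ k)).2 := by
          rwa [eq_comm, dist_eq_zero] at h'
        rw [heq] at this
        simp at this
    nlinarith [hu3 (φ k), hk3, hlipk, hd0]
  · have hdpos : 0 < dist z.1 z.2 := dist_pos.2 hzz
    obtain ⟨B, hB⟩ := Metric.isBounded_iff.1 (hs.image hf.continuous).isBounded
    have hdt : Tendsto (fun k => dist (u (φ k)).1 (u (φ k)).2) atTop (𝓝 (dist z.1 z.2)) :=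
      h1.dist h2
    have hev : ∀ᶠ k in atTop, dist z.1 z.2 / 2 < dist (u (φ k)).1 (u (φ k)).2 :=
      hdt.eventually_const_lt (by linarith)
    have hev3 : ∀ᶠ k in atTop, B / (dist z.1 z.2 / 2) < ((φ k : ℕ) : ℝ) :=
      hφtop.eventually_gt_atTop _
    obtain ⟨k, hk1, hk3⟩ := (hev.and hev3).exists
    have hBk : dist (f (u (φ k)).1) (f (u (φ k)).2) ≤ B :=
      hB (mem_image_of_mem f (hu1 _)) (mem_image_of_mem f (hu2 _))
    have h3 := hu3 (φ k)
    have hB0 : 0 ≤ B := le_trans dist_nonneg hBk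
    have : ((φ k : ℕ) : ℝ) * (dist z.1 z.2 / 2) < B := by
      calc ((φ k : ℕ) : ℝ) * (dist z.1 z.2 / 2)
          ≤ ((φ k : ℕ) : ℝ) * dist (u (φ k)).1 (u (φ k)).2 := by
            apply mul_le_mul_of_nonneg_left hk1.le (Nat.cast_nonneg _)
      _ < dist (f (u (φ k)).1) (f (u (φ k)).2) := h3
      _ ≤ B := hBk
    rw [div_lt_iff₀ (by linarith)] at hk3
    linarith

section Mono
variable {n m : ℕ} {wl wu : Fin m → ℝ}
  {d : (Fin n → ℝ) → (Fin m → ℝ) → (Fin n → ℝ) → (Fin m → ℝ) → (Fin n → ℝ)}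

lemma decomp_mono_x
    (hmx : ∀ (i j : Fin n), j ≠ i → ∀ (x xh : Fin n → ℝ) (s t : ℝ), s ≤ t →
        ∀ w ∈ Set.Icc wl wu, ∀ wh ∈ Set.Icc wl wu,
          d (Function.update x j s) w xh wh i ≤ d (Function.update x j t) w xh wh i)
    (i : Fin n) {p q : Fin n → ℝ} (hpq : p ≤ q) (hii : p i = q i)
    (xh : Fin n → ℝ) {w wh : Fin m → ℝ} (hw : w ∈ Set.Icc wl wu) (hwh : wh ∈ Set.Icc wl wu) :
    d p w xh wh i ≤ d q w xh wh i := by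
  classical
  have key : ∀ s : Finset (Fin n), d p w xh wh i ≤ d (s.piecewise q p) w xh wh i := by
    intro s
    induction s using Finset.induction_on with
    | empty => simp
    | @insert k s hk ih =>
      refine ih.trans ?_
      rw [Finset.piecewise_insert]
      have hbk : (s.piecewise q p) k = p k := Finset.piecewise_eq_of_notMem _ _ _ hk
      by_cases hki : k = i
      · have : q k = (s.piecewise q p) k := by rw [hbk, hki, hii]
        rw [this, Function.update_eq_self]
      · calc d (s.piecewise q p) w xh wh i
            = d (Function.update (s.piecewise q p) k (p k)) w xh wh i := by
              rw [← hbk, Function.update_eq_self]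
          _ ≤ d (Function.update (s.piecewise q p) k (q k)) w xh wh i :=
              hmx i k hki _ xh (p k) (q k) (hpq k) w hw wh hwh
  have := key Finset.univ
  rwa [Finset.piecewise_univ] at this

lemma decomp_anti_xh
    (hax : ∀ (i j : Fin n) (x xh : Fin n → ℝ) (s t : ℝ), s ≤ t →
        ∀ w ∈ Set.Icc wl wu, ∀ wh ∈ Set.Icc wl wu,
          d x w (Function.update xh j t) wh i ≤ d x w (Function.update xh j s) wh i)
    (i : Fin n) (x : Fin n → ℝ) {p q : Fin n → ℝ} (hpq : p ≤ q)
    {w wh : Fin m → ℝ} (hw : w ∈ Set.Icc wl wu) (hwh : wh ∈ Set.Icc wl wu) :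
    d x w q wh i ≤ d x w p wh i := by
  classical
  have key : ∀ s : Finset (Fin n), d x w (s.piecewise q p) wh i ≤ d x w p wh i := by
    intro s
    induction s using Finset.induction_on with
    | empty => simp
    | @insert k s hk ih =>
      refine le_trans ?_ ih
      rw [Finset.piecewise_insert]
      have hbk : (s.piecewise q p) k = p k := Finset.piecewise_eq_of_notMem _ _ _ hk
      calc d x w (Function.update (s.piecewise q p) k (q k)) wh i
          ≤ d x w (Function.update (s.piecewise q p) k (p k)) wh i :=
            hax i k _ _ (p k) (q k) (hpq k) w hw wh hwh
        _ = d x w (s.piecewise q p) wh i := by rw [← hbk, Function.update_eq_self]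
  have := key Finset.univ
  rwa [Finset.piecewise_univ] at this

lemma finsetPiecewise_mem_Icc {w1 w2 : Fin m → ℝ} (h1 : w1 ∈ Set.Icc wl wu)
    (h2 : w2 ∈ Set.Icc wl wu) (s : Finset (Fin m)) [DecidablePred (· ∈ s)] :
    s.piecewise w2 w1 ∈ Set.Icc wl wu := by
  have h : ∀ k, wl k ≤ s.piecewise w2 w1 k ∧ s.piecewise w2 w1 k ≤ wu k := by
    intro k; by_cases hks : k ∈ s
    · rw [Finset.piecewise_eq_of_mem _ _ _ hks]; exact ⟨h2.1 k, h2.2 k⟩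
    · rw [Finset.piecewise_eq_of_notMem _ _ _ hks]; exact ⟨h1.1 k, h1.2 k⟩
  exact ⟨fun k => (h k).1, fun k => (h k).2⟩

lemma decomp_mono_w
    (hmw : ∀ (i : Fin n) (k : Fin m) (x xh : Fin n → ℝ) (s t : ℝ),
        wl k ≤ s → s ≤ t → t ≤ wu k →
        ∀ w ∈ Set.Icc wl wu, ∀ wh ∈ Set.Icc wl wu,
          d x (Function.update w k s) xh wh i ≤ d x (Function.update w k t) xh wh i)
    (i : Fin n) (x xh : Fin n → ℝ) {w1 w2 wh : Fin m → ℝ} (h12 : w1 ≤ w2)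
    (h1 : w1 ∈ Set.Icc wl wu) (h2 : w2 ∈ Set.Icc wl wu) (hwh : wh ∈ Set.Icc wl wu) :
    d x w1 xh wh i ≤ d x w2 xh wh i := by
  classical
  have key : ∀ s : Finset (Fin m), d x w1 xh wh i ≤ d x (s.piecewise w2 w1) xh wh i := by
    intro s
    induction s using Finset.induction_on with
    | empty => simp
    | @insert k s hk ih =>
      refine ih.trans ?_
      rw [Finset.piecewise_insert]
      have hbk : (s.piecewise w2 w1) k = w1 k := Finset.piecewise_eq_of_notMem _ _ _ hk
      calc d x (s.piecewise w2 w1) xh wh i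
          = d x (Function.update (s.piecewise w2 w1) k (w1 k)) xh wh i := by
            rw [← hbk, Function.update_eq_self]
        _ ≤ d x (Function.update (s.piecewise w2 w1) k (w2 k)) xh wh i :=
            hmw i k x xh (w1 k) (w2 k) (h1.1 k) (h12 k) (h2.2 k) _
              (finsetPiecewise_mem_Icc h1 h2 s) wh hwh
  have := key Finset.univ
  rwa [Finset.piecewise_univ] at this

lemma decomp_anti_wh
    (haw : ∀ (i : Fin n) (k : Fin m) (x xh : Fin n → ℝ) (s t : ℝ),
        wl k ≤ s → s ≤ t → t ≤ wu k →
        ∀ w ∈ Set.Icc wl wu, ∀ wh ∈ Set.Icc wl wu,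
          d x w xh (Function.update wh k t) i ≤ d x w xh (Function.update wh k s) i)
    (i : Fin n) (x xh : Fin n → ℝ) {w : Fin m → ℝ} {w1 w2 : Fin m → ℝ} (h12 : w1 ≤ w2)
    (hw : w ∈ Set.Icc wl wu) (h1 : w1 ∈ Set.Icc wl wu) (h2 : w2 ∈ Set.Icc wl wu) :
    d x w xh w2 i ≤ d x w xh w1 i := by
  classical
  have key : ∀ s : Finset (Fin m), d x w xh (s.piecewise w2 w1) i ≤ d x w xh w1 i := by
    intro s
    induction s using Finset.induction_on with
    | empty => simp
    | @insert k s hk ih =>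
      refine le_trans ?_ ih
      rw [Finset.piecewise_insert]
      have hbk : (s.piecewise w2 w1) k = w1 k := Finset.piecewise_eq_of_notMem _ _ _ hk
      calc d x w xh (Function.update (s.piecewise w2 w1) k (w2 k)) i
          ≤ d x w xh (Function.update (s.piecewise w2 w1) k (w1 k)) i :=
            haw i k x xh (w1 k) (w2 k) (h1.1 k) (h12 k) (h2.2 k) w hw _
              (finsetPiecewise_mem_Icc h1 h2 s)
        _ = d x w xh (s.piecewise w2 w1) i := by rw [← hbk, Function.update_eq_self]
  have := key Finset.univ
  rwa [Finset.piecewise_univ] at this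

end Mono

lemma continuousOn_finset_sup' {ι : Type*} {s : Finset ι} (hs : s.Nonempty)
    {g : ι → ℝ → ℝ} {t : Set ℝ} (hg : ∀ i ∈ s, ContinuousOn (g i) t) :
    ContinuousOn (fun z => s.sup' hs (fun i => g i z)) t := by
  induction hs using Finset.Nonempty.cons_induction with
  | singleton a => simpa using hg a (by simp)
  | cons a s ha hsne ih =>
    have heq : (fun z => (Finset.cons a s ha).sup' (Finset.cons_nonempty ha) (fun i => g i z))
        = fun z => (g a z) ⊔ (s.sup' hsne (fun i => g i z)) := by
      funext z; rw [Finset.sup'_cons hsne]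
    rw [heq]
    exact (hg a (by simp)).sup (ih (fun i hi => hg i (Finset.mem_cons_of_mem hi)))

end AuxHelpers

/-- Proposition 2: if the backward-time vector field `G = -F` is
mixed-monotone with respect to `D`, then the backward reachable set is over-approximated
by the embedding system built from `D`: if a solution `x` of `ẋ = F(x, w(t))` starting at
`x₀` satisfies `a(0) ⪯ x(T) ⪯ â(0)`, then `a(T) ⪯ x₀ ⪯ â(T)`; i.e.
`S^F(T; [a(0), â(0)]) ⊆ [a(T), â(T)]`. -/
theorem prop2_backward_reachable_overapproximation
    {n m : ℕ} (wl wu : Fin m → ℝ) (hwlu : wl ≤ wu)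
    (F : (Fin n → ℝ) → (Fin m → ℝ) → (Fin n → ℝ))
    (D : (Fin n → ℝ) → (Fin m → ℝ) → (Fin n → ℝ) → (Fin m → ℝ) → (Fin n → ℝ))
    -- D is a decomposition function for the backward-time vector field G = -F
    (hD : IsDecompositionFunction wl wu (fun x w => -(F x w)) D)
    (T : ℝ) (hT : 0 ≤ T)
    -- (a, ah) is a solution of the embedding ODE (ȧ, ȧ̂) = E(a, â) on [0, T]
    (a ah : ℝ → (Fin n → ℝ))
    (ha : ∀ t ∈ Set.Icc (0:ℝ) T, HasDerivAt a (D (a t) wl (ah t) wu) t)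
    (hah : ∀ t ∈ Set.Icc (0:ℝ) T, HasDerivAt ah (D (ah t) wu (a t) wl) t)
    (x0 : Fin n → ℝ)
    (w : ℝ → (Fin m → ℝ))
    (hwmem : ∀ t ∈ Set.Icc (0:ℝ) T, w t ∈ Set.Icc wl wu)
    (hwpc : PiecewiseContinuousOn w (Set.Icc 0 T))
    (x : ℝ → (Fin n → ℝ))
    (hx : ∀ t ∈ Set.Icc (0:ℝ) T, HasDerivAt x (F (x t) (w t)) t)
    (hx0 : x 0 = x0)
    (hxT : a 0 ≤ x T ∧ x T ≤ ah 0) :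
    a T ≤ x0 ∧ x0 ≤ ah T := by
  classical
  obtain ⟨hLip, hdiag, hmx, hax, hmw, haw⟩ := hD
  have hwl : wl ∈ Set.Icc wl wu := ⟨le_refl _, hwlu⟩
  have hwu : wu ∈ Set.Icc wl wu := ⟨hwlu, le_refl _⟩
  set y : ℝ → Fin n → ℝ := fun t => x (T - t) with hy_def
  set v : ℝ → Fin m → ℝ := fun t => w (T - t) with hv_def
  have hmemT : ∀ t ∈ Set.Icc (0:ℝ) T, T - t ∈ Set.Icc (0:ℝ) T := fun t ht =>
    ⟨by linarith [ht.2], by linarith [ht.1]⟩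
  have hv : ∀ t ∈ Set.Icc (0:ℝ) T, v t ∈ Set.Icc wl wu := fun t ht => hwmem _ (hmemT t ht)
  have hy' : ∀ t ∈ Set.Icc (0:ℝ) T, HasDerivAt y (-(F (y t) (v t))) t := by
    intro t ht
    have h1 : HasDerivAt (fun s : ℝ => T - s) (-1) t := (hasDerivAt_id t).const_sub T
    have h2 := HasDerivAt.scomp t (hx (T - t) (hmemT t ht)) h1
    have h3 : HasDerivAt (fun s => x (T - s)) (-(F (x (T - t)) (w (T - t)))) t := by
      rw [neg_one_smul] at h2
      exact h2
    exact h3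
  -- derivative of components
  have hcomp : ∀ (i : Fin n) (c : ℝ → Fin n → ℝ) (V : Fin n → ℝ) (t : ℝ),
      HasDerivAt c V t → HasDerivAt (fun s => c s i) (V i) t := by
    intro i c V t h
    exact (ContinuousLinearMap.proj i :
      (Fin n → ℝ) →L[ℝ] ℝ).hasFDerivAt.comp_hasDerivAt t h
  -- index family
  have hne : (Finset.univ : Finset (Option (Fin n × Bool))).Nonempty := Finset.univ_nonempty
  set g : Option (Fin n × Bool) → ℝ → ℝ := fun o t =>
    match o with
    | none => 0
    | some (i, false) => a t i - y t i
    | some (i, true) => y t i - ah t i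
    with hg_def
  set M : ℝ → ℝ := fun t => Finset.univ.sup' hne (fun o => g o t) with hM_def
  have hMle : ∀ o t, g o t ≤ M t := fun o t =>
    Finset.le_sup' (fun o => g o t) (Finset.mem_univ o)
  have hM0 : ∀ t, 0 ≤ M t := fun t => hMle none t
  set dg : Option (Fin n × Bool) → ℝ → ℝ := fun o t =>
    match o with
    | none => 0
    | some (i, false) => D (a t) wl (ah t) wu i - (-(F (y t) (v t))) i
    | some (i, true) => (-(F (y t) (v t))) i - D (ah t) wu (a t) wl i
    with hdg_def
  have hgderiv : ∀ o, ∀ t ∈ Set.Icc (0:ℝ) T, HasDerivAt (g o) (dg o t) t := by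
    rintro (_ | ⟨i, (_ | _)⟩) t ht
    · exact hasDerivAt_const t 0
    · exact (hcomp i a _ t (ha t ht)).sub (hcomp i y _ t (hy' t ht))
    · exact (hcomp i y _ t (hy' t ht)).sub (hcomp i ah _ t (hah t ht))
  have hgcont : ∀ o, ContinuousOn (g o) (Set.Icc 0 T) := fun o t ht =>
    ((hgderiv o t ht).continuousAt).continuousWithinAt
  have hMcont : ContinuousOn M (Set.Icc 0 T) :=
    continuousOn_finset_sup' hne (fun o _ => hgcont o)
  -- bounds
  obtain ⟨R, hR⟩ := (isCompact_Icc (a := (0:ℝ)) (b := T)).exists_bound_of_continuousOn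
    (fun t ht => ((hy' t ht).continuousAt).continuousWithinAt)
  obtain ⟨Mb, hMb⟩ := (isCompact_Icc (a := (0:ℝ)) (b := T)).exists_bound_of_continuousOn hMcont
  have hMble : ∀ t ∈ Set.Icc (0:ℝ) T, M t ≤ Mb := fun t ht =>
    le_trans (le_abs_self _) (hMb t ht)
  have hMb0 : 0 ≤ Mb := le_trans (hM0 0) (hMble 0 ⟨le_refl _, hT⟩)
  -- Lipschitz constant on a compact set
  set S : Set (((Fin n → ℝ) × (Fin m → ℝ)) × ((Fin n → ℝ) × (Fin m → ℝ))) :=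
    (Metric.closedBall 0 (R + Mb) ×ˢ Set.Icc wl wu) ×ˢ
      (Metric.closedBall 0 (R + Mb) ×ˢ Set.Icc wl wu) with hS_def
  have hScompact : IsCompact S :=
    ((isCompact_closedBall _ _).prod isCompact_Icc).prod
      ((isCompact_closedBall _ _).prod isCompact_Icc)
  obtain ⟨C, hC0, hC⟩ := locallyLipschitz_compact hLip hScompact
  -- Lipschitz estimate near the diagonal
  have hlip_est : ∀ t ∈ Set.Icc (0:ℝ) T, ∀ μ : ℝ, 0 ≤ μ → μ ≤ Mb →
      ∀ p q : Fin n → ℝ, ‖p - y t‖ ≤ μ → ‖q - y t‖ ≤ μ → ∀ i : Fin n,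
      |D p (v t) q (v t) i - D (y t) (v t) (y t) (v t) i| ≤ C * μ := by
    intro t ht μ hμ0 hμMb p q hp hq i
    have hyR : ‖y t‖ ≤ R := hR t ht
    have hvt := hv t ht
    have hpR : ‖p‖ ≤ R + Mb := by
      calc ‖p‖ = ‖(p - y t) + y t‖ := by ring_nf
        _ ≤ ‖p - y t‖ + ‖y t‖ := norm_add_le _ _
        _ ≤ R + Mb := by linarith
    have hqR : ‖q‖ ≤ R + Mb := by
      calc ‖q‖ = ‖(q - y t) + y t‖ := by ring_nf
        _ ≤ ‖q - y t‖ + ‖y t‖ := norm_add_le _ _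
        _ ≤ R + Mb := by linarith
    have hyR' : ‖y t‖ ≤ R + Mb := by linarith
    have hmem1 : ((p, v t), (q, v t)) ∈ S := by
      refine ⟨⟨?_, hvt⟩, ⟨?_, hvt⟩⟩ <;> rw [Metric.mem_closedBall, dist_zero_right] <;>
        assumption
    have hmem0 : ((y t, v t), (y t, v t)) ∈ S := by
      refine ⟨⟨?_, hvt⟩, ⟨?_, hvt⟩⟩ <;> rw [Metric.mem_closedBall, dist_zero_right] <;>
        assumption
    have hdist : dist ((p, v t), (q, v t)) ((y t, v t), (y t, v t)) ≤ μ := by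
      rw [Prod.dist_eq, Prod.dist_eq, Prod.dist_eq]
      simp only [dist_self]
      rw [dist_eq_norm, dist_eq_norm]
      apply max_le <;> apply max_le <;> first | assumption | exact hμ0
    have hCd := hC _ hmem1 _ hmem0
    calc |D p (v t) q (v t) i - D (y t) (v t) (y t) (v t) i|
        = dist (D p (v t) q (v t) i) (D (y t) (v t) (y t) (v t) i) := (Real.dist_eq _ _).symm
      _ ≤ dist (D p (v t) q (v t)) (D (y t) (v t) (y t) (v t)) := dist_le_pi_dist _ _ i
      _ ≤ C * dist ((p, v t), (q, v t)) ((y t, v t), (y t, v t)) := hCd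
      _ ≤ C * μ := mul_le_mul_of_nonneg_left hdist hC0
  have hone : ∀ (μ : ℝ), 0 ≤ μ → ‖μ • (1 : Fin n → ℝ)‖ ≤ μ := by
    intro μ hμ
    apply (pi_norm_le_iff_of_nonneg hμ).2
    intro j
    simp [abs_of_nonneg hμ]
  -- the key derivative bound at attaining indices
  have hdg_le : ∀ t ∈ Set.Icc (0:ℝ) T, ∀ o, g o t = M t → dg o t ≤ C * M t := by
    intro t ht o ho
    have hμ0 : 0 ≤ M t := hM0 t
    have hμMb : M t ≤ Mb := hMble t ht
    have hvt := hv t ht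
    have hdiag' : D (y t) (v t) (y t) (v t) = -(F (y t) (v t)) := hdiag (y t) (v t) hvt
    have h1 : a t ≤ y t + M t • (1 : Fin n → ℝ) := by
      intro j
      have := hMle (some (j, false)) t
      simp only [hg_def] at this
      simp only [Pi.add_apply, Pi.smul_apply, Pi.one_apply, smul_eq_mul, mul_one]
      linarith
    have h2 : y t - M t • (1 : Fin n → ℝ) ≤ ah t := by
      intro j
      have := hMle (some (j, true)) t
      simp only [hg_def] at this
      simp only [Pi.sub_apply, Pi.smul_apply, Pi.one_apply, smul_eq_mul, mul_one]
      linarith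
    have hnp : ‖(y t + M t • (1 : Fin n → ℝ)) - y t‖ ≤ M t := by
      simpa using hone (M t) hμ0
    have hnq : ‖(y t - M t • (1 : Fin n → ℝ)) - y t‖ ≤ M t := by
      have : (y t - M t • (1 : Fin n → ℝ)) - y t = -(M t • (1 : Fin n → ℝ)) := by ring_nf
      rw [this, norm_neg]
      exact hone (M t) hμ0
    match o with
    | none =>
      show (0 : ℝ) ≤ C * M t
      exact mul_nonneg hC0 hμ0
    | some (i, false) =>
      have heq : a t i - y t i = M t := ho
      have h1i : a t i = (y t + M t • (1 : Fin n → ℝ)) i := by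
        simp only [Pi.add_apply, Pi.smul_apply, Pi.one_apply, smul_eq_mul, mul_one]
        linarith
      have s1 : D (a t) wl (ah t) wu i ≤ D (y t + M t • 1) wl (ah t) wu i :=
        decomp_mono_x hmx i h1 h1i (ah t) hwl hwu
      have s2 : D (y t + M t • 1) wl (ah t) wu i ≤ D (y t + M t • 1) wl (y t - M t • 1) wu i :=
        decomp_anti_xh hax i _ h2 hwl hwu
      have s3 : D (y t + M t • 1) wl (y t - M t • 1) wu i
          ≤ D (y t + M t • 1) (v t) (y t - M t • 1) wu i :=
        decomp_mono_w hmw i _ _ hvt.1 hwl hvt hwu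
      have s4 : D (y t + M t • 1) (v t) (y t - M t • 1) wu i
          ≤ D (y t + M t • 1) (v t) (y t - M t • 1) (v t) i :=
        decomp_anti_wh haw i _ _ hvt.2 hvt hvt hwu
      have s5 := hlip_est t ht (M t) hμ0 hμMb _ _ hnp hnq i
      have s5' := (abs_le.1 s5).2
      have hdi : D (y t) (v t) (y t) (v t) i = (-(F (y t) (v t))) i := congrFun hdiag' i
      show D (a t) wl (ah t) wu i - (-(F (y t) (v t))) i ≤ C * M t
      rw [← hdi]
      linarith
    | some (i, true) =>
      have heq : y t i - ah t i = M t := ho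
      have h2i : (y t - M t • (1 : Fin n → ℝ)) i = ah t i := by
        simp only [Pi.sub_apply, Pi.smul_apply, Pi.one_apply, smul_eq_mul, mul_one]
        linarith
      have s1 : D (y t - M t • 1) wu (a t) wl i ≤ D (ah t) wu (a t) wl i :=
        decomp_mono_x hmx i h2 h2i (a t) hwu hwl
      have s2 : D (y t - M t • 1) wu (y t + M t • 1) wl i ≤ D (y t - M t • 1) wu (a t) wl i :=
        decomp_anti_xh hax i _ h1 hwu hwl
      have s3 : D (y t - M t • 1) (v t) (y t + M t • 1) wl i
          ≤ D (y t - M t • 1) wu (y t + M t • 1) wl i :=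
        decomp_mono_w hmw i _ _ hvt.2 hvt hwu hwl
      have s4 : D (y t - M t • 1) (v t) (y t + M t • 1) (v t) i
          ≤ D (y t - M t • 1) (v t) (y t + M t • 1) wl i :=
        decomp_anti_wh haw i _ _ hvt.1 hvt hwl hvt
      have s5 := hlip_est t ht (M t) hμ0 hμMb _ _ hnq hnp i
      have s5' := (abs_le.1 s5).1
      have hdi : D (y t) (v t) (y t) (v t) i = (-(F (y t) (v t))) i := congrFun hdiag' i
      show (-(F (y t) (v t))) i - D (ah t) wu (a t) wl i ≤ C * M t
      rw [← hdi]
      linarith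
  -- initial condition
  have hM0le : M 0 ≤ 0 := by
    apply Finset.sup'_le
    rintro (_ | ⟨i, (_ | _)⟩) _
    · exact le_refl 0
    · show a 0 i - y 0 i ≤ 0
      have hy0 : y 0 = x T := by rw [hy_def]; simp
      rw [hy0]
      have := hxT.1 i
      linarith
    · show y 0 i - ah 0 i ≤ 0
      have hy0 : y 0 = x T := by rw [hy_def]; simp
      rw [hy0]
      have := hxT.2 i
      linarith
  -- Gronwall
  have key : ∀ t ∈ Set.Icc (0:ℝ) T, M t ≤ gronwallBound 0 C 0 (t - 0) := by
    apply le_gronwallBound_of_liminf_deriv_right_le (f' := fun t => C * M t) hMcont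
      ?_ hM0le (fun t _ => by simp)
    intro t ht r hr
    have htI : t ∈ Set.Icc (0:ℝ) T := Ico_subset_Icc_self ht
    have hev : ∀ᶠ z in 𝓝[>] t, ∀ o : Option (Fin n × Bool), g o z < M t + r * (z - t) := by
      rw [eventually_all]
      intro o
      rcases eq_or_lt_of_le (hMle o t) with ho | ho
      · -- attaining index
        have hd := hgderiv o t htI
        have hslope : Tendsto (slope (g o) t) (𝓝[>] t) (𝓝 (dg o t)) :=
          (hasDerivAt_iff_tendsto_slope.1 hd).mono_left
            (nhdsWithin_mono t (fun z hz => ne_of_gt hz))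
        have hlt : dg o t < r := lt_of_le_of_lt (hdg_le t htI o ho) hr
        filter_upwards [hslope.eventually_lt_const hlt, self_mem_nhdsWithin] with z hz1 hz2
        have hzt : 0 < z - t := sub_pos.2 hz2
        rw [slope_def_field, div_lt_iff₀ hzt] at hz1
        have : g o t = M t := ho
        linarith
      · -- non-attaining index
        have hcont := (hgderiv o t htI).continuousAt
        have h1 : Tendsto (g o) (𝓝[>] t) (𝓝 (g o t)) :=
          hcont.tendsto.mono_left nhdsWithin_le_nhds
        have h2 : Tendsto (fun z => M t + r * (z - t)) (𝓝[>] t) (𝓝 (M t)) := by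
          have : Tendsto (fun z => M t + r * (z - t)) (𝓝 t) (𝓝 (M t + r * (t - t))) := by
            apply Tendsto.add tendsto_const_nhds
            exact (tendsto_const_nhds.mul ((continuous_id.sub continuous_const).tendsto t))
          simpa using this.mono_left nhdsWithin_le_nhds
        have hmid1 : g o t < (g o t + M t) / 2 := by linarith
        have hmid2 : (g o t + M t) / 2 < M t := by linarith
        filter_upwards [h1.eventually_lt_const hmid1, h2.eventually_const_lt hmid2]
          with z hz1 hz2
        linarith
    refine ((hev.and self_mem_nhdsWithin).mono ?_).frequently
    rintro z ⟨hz1, hz2⟩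
    have hzt : 0 < z - t := sub_pos.2 hz2
    have hMz : M z < M t + r * (z - t) := by
      apply (Finset.sup'_lt_iff hne).2
      intro o _
      exact hz1 o
    rw [inv_mul_eq_div, div_lt_iff₀ hzt]
    linarith
  have hMT : M T ≤ 0 := by
    have := key T ⟨hT, le_refl T⟩
    rwa [sub_zero, gronwallBound_ε0_δ0] at this
  have hyT : y T = x0 := by rw [hy_def]; simp [hx0]
  constructor
  · intro i
    have h := le_trans (hMle (some (i, false)) T) hMT
    have : a T i - y T i ≤ 0 := h
    have hyi : y T i = x0 i := congrFun hyT i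
    linarith
  · intro i
    have h := le_trans (hMle (some (i, true)) T) hMT
    have : y T i - ah T i ≤ 0 := h
    have hyi : y T i = x0 i := congrFun hyT i
    linarith
end

section
/- (Special Case 2) Suppose F is mixed-monotone with respect to a decomposition function d, and suppose additionally that for each i, d_i(x, w, x̂, ŵ) is nondecreasing in x_i. Then the backward-time vector field G(x, w) := -F(x, w) is mixed-monotone with decomposition function D(x, w, x̂, ŵ) := -d(x̂, ŵ, x, w); that is, D satisfies all the decomposition-function conditions for G. -/
open Set Function Filter Topology

/-- Special Case 2: if `F` is mixed-monotone with respect to `d` and,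
additionally, each `dᵢ` is nondecreasing in `xᵢ`, then the backward-time vector field
`G(x, w) = -F(x, w)` is mixed-monotone with decomposition function
`D(x, w, x̂, ŵ) = -d(x̂, ŵ, x, w)`. -/
theorem specialcase2_backward_decomposition
    {n m : ℕ} (wl wu : Fin m → ℝ) (hwlu : wl ≤ wu)
    (F : (Fin n → ℝ) → (Fin m → ℝ) → (Fin n → ℝ))
    (d : (Fin n → ℝ) → (Fin m → ℝ) → (Fin n → ℝ) → (Fin m → ℝ) → (Fin n → ℝ))
    (hd : IsDecompositionFunction wl wu F d)
    -- each dᵢ is nondecreasing in xᵢ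
    (hdiag : ∀ (i : Fin n) (x xh : Fin n → ℝ) (s t : ℝ), s ≤ t →
      ∀ w ∈ Set.Icc wl wu, ∀ wh ∈ Set.Icc wl wu,
        d (Function.update x i s) w xh wh i ≤ d (Function.update x i t) w xh wh i) :
    IsDecompositionFunction wl wu (fun x w => -(F x w)) (fun x w xh wh => -(d xh wh x w)) := by
  obtain ⟨hL, hdiag0, hx, hxh, hw, hwh⟩ := hd
  refine ⟨?_, ?_, ?_, ?_, ?_, ?_⟩
  · have hswap : LocallyLipschitz
        (fun p : ((Fin n → ℝ) × (Fin m → ℝ)) × ((Fin n → ℝ) × (Fin m → ℝ)) =>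
          d p.2.1 p.2.2 p.1.1 p.1.2) :=
      hL.comp ((LipschitzWith.prod_snd.prodMk LipschitzWith.prod_fst).locallyLipschitz)
    exact (LipschitzWith.id.neg.locallyLipschitz).comp hswap
  · intro x w hwmem
    simp [hdiag0 x w hwmem]
  · intro i j _ x xh s t hst w hwm wh hwhm
    simpa using neg_le_neg (hxh i j xh x s t hst wh hwhm w hwm)
  · intro i j x xh s t hst w hwm wh hwhm
    rcases eq_or_ne j i with rfl | hji
    · simpa using neg_le_neg (hdiag j xh x s t hst wh hwhm w hwm)
    · simpa using neg_le_neg (hx i j hji xh x s t hst wh hwhm w hwm)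
  · intro i k x xh s t h1 h2 h3 w hwm wh hwhm
    simpa using neg_le_neg (hwh i k xh x s t h1 h2 h3 wh hwhm w hwm)
  · intro i k x xh s t h1 h2 h3 w hwm wh hwhm
    simpa using neg_le_neg (hw i k xh x s t h1 h2 h3 wh hwhm w hwm)
end

section
/- (Theorem 2) Let G := -F be the backward-time vector field of ẋ = F(x, w), and suppose G is mixed-monotone with respect to a decomposition function D. If x̲ ⪯ x̄ in ℝⁿ satisfy 0 ⪯_SE E(x̲, x̄), i.e., D(x̲, w̲, x̄, w̄) ⪰ 0 and D(x̄, w̄, x̲, w̲) ⪯ 0 componentwise, then the complement ℝⁿ \ [x̲, x̄] is robustly forward invariant for ẋ = F(x, w): every solution x of ẋ = F(x, w(t)) under any piecewise continuous disturbance w valued in 𝒲 with x(0) ∉ [x̲, x̄] satisfies x(t) ∉ [x̲, x̄] for all t ≥ 0 in its interval of existence. -/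
open Set Function Filter Topology

lemma sqPos_hasDerivAt (s : ℝ) : HasDerivAt (fun r : ℝ => (max r 0)^2) (2 * max s 0) s := by
  rcases lt_trichotomy s 0 with h | h | h
  · have he : (fun r : ℝ => (max r 0)^2) =ᶠ[𝓝 s] fun _ => (0:ℝ) := by
      filter_upwards [eventually_lt_nhds h] with r hr
      simp [max_eq_right hr.le]
    have h0 : HasDerivAt (fun _ : ℝ => (0:ℝ)) 0 s := hasDerivAt_const _ _
    simpa [max_eq_right h.le] using h0.congr_of_eventuallyEq he
  · subst h
    rw [hasDerivAt_iff_isLittleO]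
    simp only [max_self, sub_zero, smul_zero, mul_zero, max_eq_right le_rfl]
    rw [Asymptotics.isLittleO_iff]
    intro c hc
    filter_upwards [Metric.eventually_nhds_iff.2 ⟨c, hc, fun {y} hy => hy⟩] with r hr
    have h1 : |max r 0| ≤ |r| := by
      rcases le_or_gt r 0 with h' | h'
      · simp [max_eq_right h', abs_nonneg]
      · simp [max_eq_left h'.le]
    have key : |(max r 0)^2| ≤ c * |r| := by
      rw [abs_pow]
      calc |max r 0|^2 = |max r 0| * |max r 0| := sq (|max r 0|)
        _ ≤ |r| * |max r 0| := mul_le_mul_of_nonneg_right h1 (abs_nonneg _)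
        _ ≤ c * |r| := by
            refine mul_le_mul ?_ h1 (abs_nonneg _) hc.le
            simpa [Real.dist_eq] using hr.le
    simpa using key
  · have he : (fun r : ℝ => (max r 0)^2) =ᶠ[𝓝 s] fun r => r^2 := by
      filter_upwards [eventually_gt_nhds h] with r hr
      simp [max_eq_left hr.le]
    have h2 : HasDerivAt (fun r : ℝ => r^2) (2*s) s := by
      simpa using (hasDerivAt_pow 2 s)
    simpa [max_eq_left h.le] using h2.congr_of_eventuallyEq he

lemma chain_mono {k : ℕ} (f : (Fin k → ℝ) → ℝ) (lo hi a b : Fin k → ℝ)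
    (halo : lo ≤ a) (hbhi : b ≤ hi) (hab : a ≤ b)
    (h : ∀ j, a j ≠ b j → ∀ (x : Fin k → ℝ), lo ≤ x → x ≤ hi →
      ∀ s t : ℝ, lo j ≤ s → s ≤ t → t ≤ hi j →
        f (Function.update x j s) ≤ f (Function.update x j t)) :
    f a ≤ f b := by
  set g : Finset (Fin k) → (Fin k → ℝ) := fun S => fun i => if i ∈ S then b i else a i with hg
  have hbound : ∀ S, lo ≤ g S ∧ g S ≤ hi := by
    intro S
    constructor <;> intro i <;> simp only [hg] <;> split
    · exact halo i |>.trans (hab i)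
    · exact halo i
    · exact hbhi i
    · exact (hab i).trans (hbhi i)
  have key : ∀ S : Finset (Fin k), f a ≤ f (g S) := by
    intro S
    induction S using Finset.induction_on with
    | empty => simp [hg]
    | insert j S hjS ih =>
      refine ih.trans ?_
      rcases eq_or_ne (a j) (b j) with he | he
      · have : g (insert j S) = g S := by
          funext i
          simp only [hg, Finset.mem_insert]
          rcases eq_or_ne i j with rfl | hij
          · simp [hjS, he]
          · simp [hij]
        rw [this]
      · have h1 : g S = Function.update (g S) j (a j) := by
          funext i
          rcases eq_or_ne i j with rfl | hij
          · simp [hg, hjS]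
          · simp [Function.update_of_ne hij]
        have h2 : g (insert j S) = Function.update (g S) j (b j) := by
          funext i
          rcases eq_or_ne i j with rfl | hij
          · simp [hg]
          · simp [Function.update_of_ne hij, hg, Finset.mem_insert, hij]
        rw [h1, h2]
        exact h j he (g S) (hbound S).1 (hbound S).2 (a j) (b j) (halo j) (hab j) (hbhi j)
  have : g Finset.univ = b := by funext i; simp [hg]
  simpa [this] using key Finset.univ

lemma gronwall_zero {φ ψ : ℝ → ℝ} {a b c : ℝ} (hab : a ≤ b)
    (hd : ∀ t ∈ Set.Icc a b, HasDerivAt φ (ψ t) t)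
    (hineq : ∀ t ∈ Set.Icc a b, -c * φ t ≤ ψ t)
    (hnn : ∀ t, 0 ≤ φ t) (hb0 : φ b = 0) :
    ∀ t ∈ Set.Icc a b, φ t = 0 := by
  set h : ℝ → ℝ := fun t => Real.exp (c * t) * φ t with hh
  have hderiv : ∀ t ∈ Set.Icc a b,
      HasDerivAt h (Real.exp (c * t) * (c * φ t + ψ t)) t := by
    intro t ht
    have h1 : HasDerivAt (fun t => Real.exp (c * t)) (c * Real.exp (c * t)) t := by
      simpa [mul_comm, Function.comp_def] using (Real.hasDerivAt_exp (c * t)).comp t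
        ((hasDerivAt_id t).const_mul c)
    have := h1.mul (hd t ht)
    exact this.congr_deriv (by ring)
  have hmono : MonotoneOn h (Set.Icc a b) := by
    apply monotoneOn_of_deriv_nonneg (convex_Icc a b)
    · exact fun t ht => (hderiv t ht).continuousAt.continuousWithinAt
    · intro t ht
      rw [interior_Icc] at ht
      exact (hderiv t (Ioo_subset_Icc_self ht)).differentiableAt.differentiableWithinAt
    · intro t ht
      rw [interior_Icc] at ht
      have ht' := Ioo_subset_Icc_self ht
      rw [(hderiv t ht').deriv]
      have := hineq t ht'
      have hexp : (0:ℝ) < Real.exp (c * t) := Real.exp_pos _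
      nlinarith
  intro t ht
  have h1 : h t ≤ h b := hmono ht (Set.right_mem_Icc.2 hab) ht.2
  have h2 : h b = 0 := by simp [hh, hb0]
  have h3 : 0 ≤ h t := mul_nonneg (Real.exp_pos _).le (hnn t)
  have h4 : h t = 0 := le_antisymm (h2 ▸ h1) h3
  have hexp : Real.exp (c * t) ≠ 0 := (Real.exp_pos _).ne'
  have := mul_eq_zero.1 h4
  tauto

lemma clampR (lo hi r : ℝ) (h : lo ≤ hi) :
    (lo ≤ max lo (min r hi) ∧ max lo (min r hi) ≤ hi)
  ∧ r - max lo (min r hi) = max (r - hi) 0 - max (lo - r) 0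
  ∧ (max (r - hi) 0)^2 + (max (lo - r) 0)^2 = (r - max lo (min r hi))^2
  ∧ ∀ p, lo ≤ p → p ≤ hi → |r - max lo (min r hi)| ≤ |r - p| := by
  rcases le_or_gt r lo with h1 | h1
  · have hmax : max lo (min r hi) = lo := by
      rw [min_eq_left (h1.trans h)]; exact max_eq_left h1
    have e1 : max (r - hi) 0 = 0 := max_eq_right (by linarith)
    have e2 : max (lo - r) 0 = lo - r := max_eq_left (by linarith)
    rw [hmax, e1, e2]
    refine ⟨⟨le_rfl, h⟩, by ring, by ring, fun p hp1 hp2 => ?_⟩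
    rw [abs_of_nonpos (by linarith), abs_of_nonpos (by linarith)]
    linarith
  · rcases le_or_gt hi r with h2 | h2
    · have hmax : max lo (min r hi) = hi := by
        rw [min_eq_right h2]; exact max_eq_right h
      have e1 : max (r - hi) 0 = r - hi := max_eq_left (by linarith)
      have e2 : max (lo - r) 0 = 0 := max_eq_right (by linarith)
      rw [hmax, e1, e2]
      refine ⟨⟨h, le_rfl⟩, by ring, by ring, fun p hp1 hp2 => ?_⟩
      rw [abs_of_nonneg (by linarith), abs_of_nonneg (by linarith)]
      linarith
    · have hmax : max lo (min r hi) = r := by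
        rw [min_eq_left h2.le]; exact max_eq_right h1.le
      have e1 : max (r - hi) 0 = 0 := max_eq_right (by linarith)
      have e2 : max (lo - r) 0 = 0 := max_eq_right (by linarith)
      rw [hmax, e1, e2]
      exact ⟨⟨h1.le, h2.le⟩, by ring, by ring, fun p _ _ => by
        simp [abs_nonneg]⟩

def clampV {n : ℕ} (xlo xhi y : Fin n → ℝ) : Fin n → ℝ :=
  fun i => max (xlo i) (min (y i) (xhi i))

section clampfacts
variable {n : ℕ} {xlo xhi : Fin n → ℝ} (hx : xlo ≤ xhi)
include hx

lemma clampV_mem (y : Fin n → ℝ) : clampV xlo xhi y ∈ Set.Icc xlo xhi :=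
  ⟨fun i => (clampR (xlo i) (xhi i) (y i) (hx i)).1.1,
   fun i => (clampR (xlo i) (xhi i) (y i) (hx i)).1.2⟩

lemma clampV_diff (y : Fin n → ℝ) (i : Fin n) :
    y i - clampV xlo xhi y i = max (y i - xhi i) 0 - max (xlo i - y i) 0 :=
  (clampR (xlo i) (xhi i) (y i) (hx i)).2.1

lemma clampV_sq (y : Fin n → ℝ) (i : Fin n) :
    (max (y i - xhi i) 0)^2 + (max (xlo i - y i) 0)^2 = (y i - clampV xlo xhi y i)^2 :=
  (clampR (xlo i) (xhi i) (y i) (hx i)).2.2.1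

lemma clampV_dist_le (y p : Fin n → ℝ) (hp : p ∈ Set.Icc xlo xhi) :
    dist y (clampV xlo xhi y) ≤ dist y p := by
  rw [dist_pi_le_iff dist_nonneg]
  intro i
  calc dist (y i) (clampV xlo xhi y i) = |y i - clampV xlo xhi y i| := Real.dist_eq _ _
    _ ≤ |y i - p i| := (clampR (xlo i) (xhi i) (y i) (hx i)).2.2.2 (p i) (hp.1 i) (hp.2 i)
    _ = dist (y i) (p i) := (Real.dist_eq _ _).symm
    _ ≤ dist y p := dist_le_pi_dist y p i

lemma clampV_hi {y : Fin n → ℝ} {i : Fin n} (h : xhi i ≤ y i) :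
    clampV xlo xhi y i = xhi i := by
  unfold clampV; rw [min_eq_right h]; exact max_eq_right (hx i)

lemma clampV_lo {y : Fin n → ℝ} {i : Fin n} (h : y i ≤ xlo i) :
    clampV xlo xhi y i = xlo i := by
  unfold clampV; rw [min_eq_left (h.trans (hx i))]; exact max_eq_left h

set_option linter.unusedSectionVars false in
lemma clampV_mid {y : Fin n → ℝ} {i : Fin n} (h1 : xlo i ≤ y i) (h2 : y i ≤ xhi i) :
    clampV xlo xhi y i = y i := by
  unfold clampV; rw [min_eq_left h2]; exact max_eq_right h1

end clampfacts

lemma exists_near_lipschitz {X Y : Type*} [MetricSpace X] [MetricSpace Y] {f : X → Y}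
    (hf : LocallyLipschitz f) {K : Set X} (hK : IsCompact K) :
    ∃ ε : ℝ, 0 < ε ∧ ∃ L : ℝ, 0 ≤ L ∧ ∀ a ∈ K, ∀ b ∈ K, dist a b ≤ ε →
      dist (f a) (f b) ≤ L * dist a b := by
  choose C t ht hlip using hf
  have hr : ∀ p : X, ∃ r : ℝ, 0 < r ∧ Metric.ball p r ⊆ t p := fun p =>
    Metric.mem_nhds_iff.1 (ht p) |>.imp fun r ⟨hr, hsub⟩ => ⟨hr, hsub⟩
  choose r hrpos hrsub using hr
  have hcover : K ⊆ ⋃ p ∈ K, Metric.ball p (r p / 2) := by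
    intro q hq
    exact Set.mem_biUnion hq (Metric.mem_ball_self (half_pos (hrpos q)))
  obtain ⟨s, hsK, hsfin, hs⟩ := hK.elim_finite_subcover_image
    (fun p _ => Metric.isOpen_ball) hcover
  rcases s.eq_empty_or_nonempty with rfl | hne
  · refine ⟨1, one_pos, 0, le_rfl, fun a ha b hb _ => ?_⟩
    exfalso
    simpa using hs ha
  · lift s to Finset X using hsfin with sf hsf
    have hne' : sf.Nonempty := by simpa using hne
    refine ⟨sf.inf' hne' (fun p => r p / 2), ?_, sf.sup' hne' (fun p => (C p : ℝ)), ?_, ?_⟩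
    · exact (Finset.lt_inf'_iff hne').2 fun p _ => half_pos (hrpos p)
    · obtain ⟨p, hp⟩ := hne'
      exact le_trans (C p).coe_nonneg (Finset.le_sup' (fun q => (C q : ℝ)) hp)
    · intro a ha b hb hdist
      have := hs ha
      simp only [Set.mem_iUnion] at this
      obtain ⟨p, hp, hap⟩ := this
      have hCp : (C p : ℝ) ≤ sf.sup' hne' (fun q => (C q : ℝ)) := Finset.le_sup' (fun q => (C q : ℝ)) hp
      have hεp : sf.inf' hne' (fun q => r q / 2) ≤ r p / 2 := Finset.inf'_le (fun q => r q / 2) hp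
      have hap' : dist a p < r p / 2 := by simpa [Metric.mem_ball] using hap
      have hbp : b ∈ Metric.ball p (r p) := by
        rw [Metric.mem_ball]
        calc dist b p ≤ dist b a + dist a p := dist_triangle _ _ _
          _ < r p / 2 + r p / 2 := by
              apply add_lt_add_of_le_of_lt _ hap'
              rw [dist_comm]; exact hdist.trans hεp
          _ = r p := by ring
      have hap'' : a ∈ Metric.ball p (r p) :=
        Metric.ball_subset_ball (by linarith [(hrpos p)]) hap
      have hlp := (hlip p).mono (hrsub p)
      have := hlp.dist_le_mul a hap'' b hbp
      calc dist (f a) (f b) ≤ (C p : ℝ) * dist a b := this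
        _ ≤ _ := mul_le_mul_of_nonneg_right hCp dist_nonneg

lemma upper_bdry {n m : ℕ} {wl wu : Fin m → ℝ} (hwlu : wl ≤ wu)
    {G : (Fin n → ℝ) → (Fin m → ℝ) → (Fin n → ℝ)}
    {D : (Fin n → ℝ) → (Fin m → ℝ) → (Fin n → ℝ) → (Fin m → ℝ) → (Fin n → ℝ)}
    (hD : IsDecompositionFunction wl wu G D)
    {xlo xhi : Fin n → ℝ} (i : Fin n) (z : Fin n → ℝ) (hz : z ∈ Set.Icc xlo xhi)
    (hzi : z i = xhi i) (ω : Fin m → ℝ) (hω : ω ∈ Set.Icc wl wu) :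
    D z ω z ω i ≤ D xhi wu xlo wl i := by
  have hωl : wl ≤ ω := hω.1
  have hωu : ω ≤ wu := hω.2
  have hwmem : wu ∈ Set.Icc wl wu := ⟨hwlu, le_rfl⟩
  have hwlmem : wl ∈ Set.Icc wl wu := ⟨le_rfl, hwlu⟩
  have step1 : D z ω z ω i ≤ D xhi ω z ω i := by
    refine chain_mono (fun av => D av ω z ω i) z xhi z xhi le_rfl le_rfl hz.2 ?_
    intro j hne x _ _ s t _ hst _
    have hji : j ≠ i := fun h => hne (h ▸ hzi)
    exact hD.2.2.1 i j hji x z s t hst ω hω ω hω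
  have step2 : D xhi ω z ω i ≤ D xhi ω xlo ω i := by
    have := chain_mono (fun av => -(D xhi ω av ω i)) xlo z xlo z le_rfl le_rfl hz.1 ?_
    · linarith
    intro j _ x _ _ s t _ hst _
    have := hD.2.2.2.1 i j xhi x s t hst ω hω ω hω
    linarith
  have step3 : D xhi ω xlo ω i ≤ D xhi wu xlo ω i := by
    refine chain_mono (fun u => D xhi u xlo ω i) wl wu ω wu hωl le_rfl hωu ?_
    intro j _ u hul huu s t hs hst ht
    exact hD.2.2.2.2.1 i j xhi xlo s t hs hst ht u ⟨hul, huu⟩ ω hω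
  have step4 : D xhi wu xlo ω i ≤ D xhi wu xlo wl i := by
    have := chain_mono (fun u => -(D xhi wu xlo u i)) wl wu wl ω le_rfl hωu hωl ?_
    · linarith
    intro j _ u hul huu s t hs hst ht
    have := hD.2.2.2.2.2 i j xhi xlo s t hs hst ht wu hwmem u ⟨hul, huu⟩
    linarith
  linarith

lemma lower_bdry {n m : ℕ} {wl wu : Fin m → ℝ} (hwlu : wl ≤ wu)
    {G : (Fin n → ℝ) → (Fin m → ℝ) → (Fin n → ℝ)}
    {D : (Fin n → ℝ) → (Fin m → ℝ) → (Fin n → ℝ) → (Fin m → ℝ) → (Fin n → ℝ)}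
    (hD : IsDecompositionFunction wl wu G D)
    {xlo xhi : Fin n → ℝ} (i : Fin n) (z : Fin n → ℝ) (hz : z ∈ Set.Icc xlo xhi)
    (hzi : z i = xlo i) (ω : Fin m → ℝ) (hω : ω ∈ Set.Icc wl wu) :
    D xlo wl xhi wu i ≤ D z ω z ω i := by
  have hωl : wl ≤ ω := hω.1
  have hωu : ω ≤ wu := hω.2
  have hwmem : wu ∈ Set.Icc wl wu := ⟨hwlu, le_rfl⟩
  have hwlmem : wl ∈ Set.Icc wl wu := ⟨le_rfl, hwlu⟩
  have step1 : D xlo ω z ω i ≤ D z ω z ω i := by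
    refine chain_mono (fun av => D av ω z ω i) xlo z xlo z le_rfl le_rfl hz.1 ?_
    intro j hne x _ _ s t _ hst _
    have hji : j ≠ i := fun h => hne (h ▸ hzi.symm)
    exact hD.2.2.1 i j hji x z s t hst ω hω ω hω
  have step2 : D xlo ω xhi ω i ≤ D xlo ω z ω i := by
    have := chain_mono (fun av => -(D xlo ω av ω i)) z xhi z xhi le_rfl le_rfl hz.2 ?_
    · linarith
    intro j _ x _ _ s t _ hst _
    have := hD.2.2.2.1 i j xlo x s t hst ω hω ω hω
    linarith
  have step3 : D xlo wl xhi ω i ≤ D xlo ω xhi ω i := by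
    refine chain_mono (fun u => D xlo u xhi ω i) wl wu wl ω le_rfl hωu hωl ?_
    intro j _ u hul huu s t hs hst ht
    exact hD.2.2.2.2.1 i j xlo xhi s t hs hst ht u ⟨hul, huu⟩ ω hω
  have step4 : D xlo wl xhi wu i ≤ D xlo wl xhi ω i := by
    have := chain_mono (fun u => -(D xlo wl xhi u i)) wl wu ω wu hωl le_rfl hωu ?_
    · linarith
    intro j _ u hul huu s t hs hst ht
    have := hD.2.2.2.2.2 i j xlo xhi s t hs hst ht wl hwlmem u ⟨hul, huu⟩
    linarith
  linarith

/-- Theorem 2: if the backward-time vector field `G = -F` is mixed-monotone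
with respect to `D` and `x̲ ⪯ x̄` satisfy `0 ⪯_SE E(x̲, x̄)`, then the complement
`ℝⁿ \ [x̲, x̄]` is robustly forward invariant for `ẋ = F(x, w)`. -/
theorem thm2_complement_forward_invariant
    {n m : ℕ} (wl wu : Fin m → ℝ) (hwlu : wl ≤ wu)
    (F : (Fin n → ℝ) → (Fin m → ℝ) → (Fin n → ℝ))
    (D : (Fin n → ℝ) → (Fin m → ℝ) → (Fin n → ℝ) → (Fin m → ℝ) → (Fin n → ℝ))
    -- D is a decomposition function for the backward-time vector field G = -F
    (hD : IsDecompositionFunction wl wu (fun x w => -(F x w)) D)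
    (xlo xhi : Fin n → ℝ) (hx : xlo ≤ xhi)
    -- 0 ⪯_SE E(x̲, x̄)
    (hSE : (0 : Fin n → ℝ) ≤ D xlo wl xhi wu ∧ D xhi wu xlo wl ≤ (0 : Fin n → ℝ)) :
    ∀ T : ℝ, 0 ≤ T →
      ∀ (x : ℝ → (Fin n → ℝ)) (w : ℝ → (Fin m → ℝ)),
        (∀ t ∈ Set.Icc (0:ℝ) T, w t ∈ Set.Icc wl wu) →
        PiecewiseContinuousOn w (Set.Icc 0 T) →
        (∀ t ∈ Set.Icc (0:ℝ) T, HasDerivAt x (F (x t) (w t)) t) →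
        x 0 ∉ Set.Icc xlo xhi →
        ∀ t ∈ Set.Icc (0:ℝ) T, x t ∉ Set.Icc xlo xhi := by
  intro T hT x w hw _hwpc hx' hx0 t₁ ht₁ hmem
  have ht₁T : t₁ ≤ T := ht₁.2
  have ht₁0 : 0 ≤ t₁ := ht₁.1
  -- the squared distance to the box, and its derivative
  set z : ℝ → (Fin n → ℝ) := fun s => clampV xlo xhi (x s) with hzdef
  set φ : ℝ → ℝ :=
    fun s => ∑ i, ((max (x s i - xhi i) 0)^2 + (max (xlo i - x s i) 0)^2) with hφdef
  set ψ : ℝ → ℝ :=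
    fun s => ∑ i, (2 * max (x s i - xhi i) 0 * F (x s) (w s) i
      + 2 * max (xlo i - x s i) 0 * (-(F (x s) (w s) i))) with hψdef
  have hφnn : ∀ s, 0 ≤ φ s := by
    intro s; apply Finset.sum_nonneg; intro i _; positivity
  have hφ0mem : ∀ s, φ s = 0 → x s ∈ Set.Icc xlo xhi := by
    intro s hs
    have h := (Finset.sum_eq_zero_iff_of_nonneg (fun i _ => by positivity)).1 hs
    constructor <;> intro i <;> have hi := h i (Finset.mem_univ i)
    · have hA : (max (xlo i - x s i) 0)^2 = 0 := by
        nlinarith [sq_nonneg (max (x s i - xhi i) 0), sq_nonneg (max (xlo i - x s i) 0)]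
      have := sq_eq_zero_iff.1 hA
      have h2 := le_max_left (xlo i - x s i) 0
      linarith
    · have hA : (max (x s i - xhi i) 0)^2 = 0 := by
        nlinarith [sq_nonneg (max (x s i - xhi i) 0), sq_nonneg (max (xlo i - x s i) 0)]
      have := sq_eq_zero_iff.1 hA
      have h2 := le_max_left (x s i - xhi i) 0
      linarith
  have hφt₁ : φ t₁ = 0 := by
    apply Finset.sum_eq_zero
    intro i _
    have e1 : max (x t₁ i - xhi i) 0 = 0 := max_eq_right (by linarith [hmem.2 i])
    have e2 : max (xlo i - x t₁ i) 0 = 0 := max_eq_right (by linarith [hmem.1 i])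
    rw [e1, e2]; ring
  have hφderiv : ∀ t ∈ Set.Icc (0:ℝ) T, HasDerivAt φ (ψ t) t := by
    intro t ht
    have hxi := hasDerivAt_pi.1 (hx' t ht)
    apply HasDerivAt.fun_sum
    intro i _
    have h1 : HasDerivAt (fun s => x s i - xhi i) (F (x t) (w t) i) t := (hxi i).sub_const _
    have h2 : HasDerivAt (fun s => xlo i - x s i) (-(F (x t) (w t) i)) t := (hxi i).const_sub _
    have hA := (sqPos_hasDerivAt (x t i - xhi i)).comp t h1
    have hB := (sqPos_hasDerivAt (xlo i - x t i)).comp t h2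
    exact hA.add hB
  have hψeq : ∀ t, ψ t = ∑ i, 2 * (x t i - z t i) * F (x t) (w t) i := by
    intro t
    apply Finset.sum_congr rfl
    intro i _
    rw [hzdef]
    rw [clampV_diff hx (x t) i]
    ring
  have hφeqsum : ∀ t, φ t = ∑ i, (x t i - z t i)^2 := by
    intro t
    apply Finset.sum_congr rfl
    intro i _
    rw [hzdef, clampV_sq hx (x t) i]
  -- key sign condition
  have hsign : ∀ t ∈ Set.Icc (0:ℝ) T, ∀ i, 0 ≤ (x t i - z t i) * F (z t) (w t) i := by
    intro t ht i
    have hω := hw t ht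
    have hzmem : z t ∈ Set.Icc xlo xhi := clampV_mem hx (x t)
    have hGz : D (z t) (w t) (z t) (w t) = -(F (z t) (w t)) := hD.2.1 (z t) (w t) hω
    rcases le_or_gt (x t i) (xhi i) with h1 | h1
    · rcases le_or_gt (xlo i) (x t i) with h2 | h2
      · have : z t i = x t i := clampV_mid hx h2 h1
        rw [this, sub_self, zero_mul]
      · have hzi : z t i = xlo i := clampV_lo hx h2.le
        have hlow := lower_bdry hwlu hD i (z t) hzmem hzi (w t) hω
        have hse : (0:ℝ) ≤ D xlo wl xhi wu i := by simpa using hSE.1 i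
        have hF : F (z t) (w t) i ≤ 0 := by
          have : 0 ≤ D (z t) (w t) (z t) (w t) i := le_trans hse hlow
          rw [hGz] at this
          simpa using this
        have hdiff : x t i - z t i ≤ 0 := by rw [hzi]; linarith
        nlinarith
    · have hzi : z t i = xhi i := clampV_hi hx h1.le
      have hup := upper_bdry hwlu hD i (z t) hzmem hzi (w t) hω
      have hse : D xhi wu xlo wl i ≤ 0 := by simpa using hSE.2 i
      have hF : 0 ≤ F (z t) (w t) i := by
        have : D (z t) (w t) (z t) (w t) i ≤ 0 := le_trans hup hse
        rw [hGz] at this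
        simpa using this
      have hdiff : 0 ≤ x t i - z t i := by rw [hzi]; linarith
      nlinarith
  -- the set of times after which φ vanishes up to t₁
  set S : Set ℝ := {t | t ∈ Set.Icc (0:ℝ) t₁ ∧ ∀ s ∈ Set.Icc t t₁, φ s = 0} with hSdef
  have ht₁S : t₁ ∈ S := by
    refine ⟨⟨ht₁0, le_rfl⟩, fun s hs => ?_⟩
    have : s = t₁ := le_antisymm hs.2 hs.1
    rw [this, hφt₁]
  have hSne : S.Nonempty := ⟨t₁, ht₁S⟩
  have hSbdd : BddBelow S := ⟨0, fun s hs => hs.1.1⟩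
  set t₀ := sInf S with ht₀def
  have ht₀0 : 0 ≤ t₀ := le_csInf hSne (fun s hs => hs.1.1)
  have ht₀le : t₀ ≤ t₁ := csInf_le hSbdd ht₁S
  have hIoc : ∀ s ∈ Set.Ioc t₀ t₁, φ s = 0 := by
    intro s hs
    obtain ⟨u, huS, hus⟩ := exists_lt_of_csInf_lt hSne hs.1
    exact huS.2 s ⟨hus.le, hs.2⟩
  have hφzero : ∀ s ∈ Set.Icc t₀ t₁, φ s = 0 := by
    intro s hs
    rcases eq_or_lt_of_le hs.1 with heq | h
    · rw [← heq]
      rcases eq_or_lt_of_le ht₀le with heq2 | h2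
      · rw [heq2]; exact hφt₁
      · have hcont : ContinuousAt φ t₀ :=
          (hφderiv t₀ ⟨ht₀0, ht₀le.trans ht₁T⟩).continuousAt
        have htend : Tendsto φ (𝓝[>] t₀) (𝓝 (φ t₀)) :=
          hcont.tendsto.mono_left nhdsWithin_le_nhds
        have hev : φ =ᶠ[𝓝[>] t₀] fun _ => (0:ℝ) := by
          filter_upwards [Ioc_mem_nhdsGT h2] with u hu using hIoc u hu
        have h0 : Tendsto φ (𝓝[>] t₀) (𝓝 0) := Tendsto.congr' hev.symm tendsto_const_nhds
        exact tendsto_nhds_unique htend h0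
    · exact hIoc s ⟨h, hs.2⟩
  -- main step: t₀ = 0
  have ht₀eq : t₀ = 0 := by
    by_contra hne
    have ht₀pos : 0 < t₀ := lt_of_le_of_ne ht₀0 (Ne.symm hne)
    have ht₀T : t₀ ∈ Set.Icc (0:ℝ) T := ⟨ht₀0, ht₀le.trans ht₁T⟩
    have hxt₀mem : x t₀ ∈ Set.Icc xlo xhi := hφ0mem t₀ (hφzero t₀ ⟨le_rfl, ht₀le⟩)
    -- compact set and near-Lipschitz bound
    set K : Set (((Fin n → ℝ) × (Fin m → ℝ)) × ((Fin n → ℝ) × (Fin m → ℝ))) :=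
      (Metric.closedBall (x t₀) 2 ×ˢ Set.Icc wl wu) ×ˢ
      (Metric.closedBall (x t₀) 2 ×ˢ Set.Icc wl wu) with hKdef
    have hK : IsCompact K :=
      (((isCompact_closedBall _ _).prod isCompact_Icc).prod
        ((isCompact_closedBall _ _).prod isCompact_Icc))
    obtain ⟨ε, hε, L, hL, hLip⟩ := exists_near_lipschitz hD.1 hK
    -- choose δ by continuity of x at t₀
    have hxc : ContinuousAt x t₀ := (hx' t₀ ht₀T).continuousAt
    obtain ⟨δ₁, hδ₁, hδ₁p⟩ := Metric.continuousAt_iff.1 hxc (min 1 ε) (lt_min one_pos hε)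
    set δ : ℝ := min (δ₁ / 2) t₀ with hδdef
    have hδpos : 0 < δ := lt_min (by linarith) ht₀pos
    set a : ℝ := t₀ - δ with hadef
    have ha0 : 0 ≤ a := by
      have : δ ≤ t₀ := min_le_right _ _
      simp only [hadef]; linarith
    have hat₀ : a ≤ t₀ := by simp only [hadef]; linarith
    have hsubT : Set.Icc a t₀ ⊆ Set.Icc (0:ℝ) T := fun s hs =>
      ⟨le_trans ha0 hs.1, le_trans hs.2 ht₀T.2⟩
    -- distance estimates on [a, t₀]
    have hdist : ∀ t ∈ Set.Icc a t₀, dist (x t) (x t₀) ≤ min 1 ε := by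
      intro t ht
      apply le_of_lt
      apply hδ₁p
      rw [Real.dist_eq, abs_of_nonpos (by linarith [ht.2])]
      have h1 : δ ≤ δ₁ / 2 := min_le_left _ _
      have := ht.1
      simp only [hadef] at this
      linarith
    have hzdist : ∀ t ∈ Set.Icc a t₀, dist (x t) (z t) ≤ min 1 ε := fun t ht =>
      le_trans (clampV_dist_le hx (x t) (x t₀) hxt₀mem) (hdist t ht)
    -- Lipschitz-type estimate for F between x t and z t
    have hFdiff : ∀ t ∈ Set.Icc a t₀, ∀ i,
        |F (x t) (w t) i - F (z t) (w t) i| ≤ L * dist (x t) (z t) := by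
      intro t ht i
      have htT := hsubT ht
      have hω := hw t htT
      have hxball : x t ∈ Metric.closedBall (x t₀) 2 := by
        rw [Metric.mem_closedBall]
        have := hdist t ht
        have h1 : min 1 ε ≤ 1 := min_le_left _ _
        linarith
      have hzball : z t ∈ Metric.closedBall (x t₀) 2 := by
        rw [Metric.mem_closedBall]
        calc dist (z t) (x t₀) ≤ dist (z t) (x t) + dist (x t) (x t₀) := dist_triangle _ _ _
          _ ≤ 1 + 1 := by
              apply add_le_add
              · rw [dist_comm]
                exact le_trans (hzdist t ht) (min_le_left _ _)
              · exact le_trans (hdist t ht) (min_le_left _ _)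
          _ = 2 := by norm_num
      set p : ((Fin n → ℝ) × (Fin m → ℝ)) × ((Fin n → ℝ) × (Fin m → ℝ)) :=
        ((x t, w t), (x t, w t)) with hpdef
      set q : ((Fin n → ℝ) × (Fin m → ℝ)) × ((Fin n → ℝ) × (Fin m → ℝ)) :=
        ((z t, w t), (z t, w t)) with hqdef
      have hpK : p ∈ K := ⟨⟨hxball, hω⟩, ⟨hxball, hω⟩⟩
      have hqK : q ∈ K := ⟨⟨hzball, hω⟩, ⟨hzball, hω⟩⟩
      have hpq : dist p q = dist (x t) (z t) := by
        simp only [hpdef, hqdef, Prod.dist_eq, dist_self]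
        rw [max_self, max_eq_left dist_nonneg]
      have hpqε : dist p q ≤ ε := by
        rw [hpq]
        exact le_trans (hzdist t ht) (min_le_right _ _)
      have hlip := hLip p hpK q hqK hpqε
      rw [hpq] at hlip
      have hDp : D p.1.1 p.1.2 p.2.1 p.2.2 = -(F (x t) (w t)) := hD.2.1 (x t) (w t) hω
      have hDq : D q.1.1 q.1.2 q.2.1 q.2.2 = -(F (z t) (w t)) := hD.2.1 (z t) (w t) hω
      rw [hDp, hDq, dist_neg_neg] at hlip
      calc |F (x t) (w t) i - F (z t) (w t) i|
          = dist (F (x t) (w t) i) (F (z t) (w t) i) := (Real.dist_eq _ _).symm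
        _ ≤ dist (F (x t) (w t)) (F (z t) (w t)) := dist_le_pi_dist _ _ i
        _ ≤ L * dist (x t) (z t) := hlip
    -- Gronwall inequality hypothesis
    have hineq : ∀ t ∈ Set.Icc a t₀, -(2 * n * L) * φ t ≤ ψ t := by
      intro t ht
      have htT := hsubT ht
      set d : ℝ := dist (x t) (z t) with hddef
      have hdnn : 0 ≤ d := dist_nonneg
      have hdle : ∀ i, |x t i - z t i| ≤ d := by
        intro i
        calc |x t i - z t i| = dist (x t i) (z t i) := (Real.dist_eq _ _).symm
          _ ≤ d := dist_le_pi_dist _ _ i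
      have hd2 : d^2 ≤ φ t := by
        have hsq : d ≤ Real.sqrt (φ t) := by
          rw [hddef, dist_pi_le_iff (Real.sqrt_nonneg _)]
          intro i
          rw [Real.dist_eq]
          rw [Real.le_sqrt (abs_nonneg _) (hφnn t), sq_abs]
          rw [hφeqsum t]
          exact Finset.single_le_sum (f := fun j => (x t j - z t j)^2) (fun j _ => sq_nonneg _) (Finset.mem_univ i)
        calc d^2 ≤ (Real.sqrt (φ t))^2 := pow_le_pow_left₀ hdnn hsq 2
          _ = φ t := Real.sq_sqrt (hφnn t)
      have key : ∀ i, -(2 * L * φ t) + 2 * (x t i - z t i) * F (z t) (w t) i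
          ≤ 2 * (x t i - z t i) * F (x t) (w t) i := by
        intro i
        have h1 := hFdiff t ht i
        have h2 := hdle i
        have habs : |2 * (x t i - z t i) * (F (x t) (w t) i - F (z t) (w t) i)|
            ≤ 2 * L * φ t := by
          rw [abs_mul, abs_mul, abs_two]
          calc 2 * |x t i - z t i| * |F (x t) (w t) i - F (z t) (w t) i|
              ≤ 2 * d * (L * d) := by
                apply mul_le_mul (by linarith) h1 (abs_nonneg _) (by linarith)
            _ = 2 * L * d^2 := by ring
            _ ≤ 2 * L * φ t := by nlinarith
        have := neg_abs_le (2 * (x t i - z t i) * (F (x t) (w t) i - F (z t) (w t) i))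
        nlinarith [habs, this]
      have hsum1 : ∑ i, (-(2 * L * φ t) + 2 * (x t i - z t i) * F (z t) (w t) i)
          ≤ ∑ i, 2 * (x t i - z t i) * F (x t) (w t) i :=
        Finset.sum_le_sum (fun i _ => key i)
      have hsum2 : ∑ i : Fin n, (-(2 * L * φ t) + 2 * (x t i - z t i) * F (z t) (w t) i)
          = (n : ℝ) * (-(2 * L * φ t)) + ∑ i, 2 * (x t i - z t i) * F (z t) (w t) i := by
        rw [Finset.sum_add_distrib, Finset.sum_const, Finset.card_univ, Fintype.card_fin,
          nsmul_eq_mul]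
      have hsum3 : 0 ≤ ∑ i, 2 * (x t i - z t i) * F (z t) (w t) i := by
        apply Finset.sum_nonneg
        intro i _
        have := hsign t htT i
        linarith
      rw [hψeq t]
      rw [hsum2] at hsum1
      nlinarith [hsum1, hsum3, hφnn t]
    -- apply Gronwall
    have hres := gronwall_zero hat₀ (fun t ht => hφderiv t (hsubT ht)) hineq hφnn
      (hφzero t₀ ⟨le_rfl, ht₀le⟩)
    have haS : a ∈ S := by
      refine ⟨⟨ha0, le_trans hat₀ ht₀le⟩, fun s hs => ?_⟩
      rcases le_total s t₀ with h | h
      · exact hres s ⟨hs.1, h⟩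
      · exact hφzero s ⟨h, hs.2⟩
    have : t₀ ≤ a := csInf_le hSbdd haS
    simp only [hadef] at this
    linarith
  -- conclude
  have h0mem : (0:ℝ) ∈ Set.Icc t₀ t₁ := ⟨le_of_eq ht₀eq, ht₁0⟩
  exact hx0 (hφ0mem 0 (hφzero 0 h0mem))
end

section
/- (Special Case 1) Let F : ℝⁿ × 𝒲 → ℝᶰ be continuously differentiable, with 𝒲 = [w̲, w̄] ⊆ ℝᵐ a hyperrectangle. Suppose for every pair i ≠ j there are a flag δ_{ij} ∈ {0, 1} and a constant α_{ij} ≥ 0 such that: if δ_{ij} = 0 then ∂F_i/∂x_j(x, w) ≥ -α_{ij} for all x ∈ ℝⁿ, w ∈ 𝒲, and if δ_{ij} = 1 then ∂F_i/∂x_j(x, w) ≤ α_{ij} for all x, w; and for every pair i, k there are a flag ε_{ik} ∈ {0, 1} and a constant β_{ik} ≥ 0 such that: if ε_{ik} = 0 then ∂F_i/∂w_k(x, w) ≥ -β_{ik} for all x, w, and if ε_{ik} = 1 then ∂F_i/∂w_k(x, w) ≤ β_{ik} for all x, w. For each i define ξⁱ ∈ ℝⁿ by ξⁱ_i = x_i,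 ξⁱ_j = x_j if δ_{ij} = 0 and ξⁱ_j = x̂_j if δ_{ij} = 1 (j ≠ i), and πⁱ ∈ ℝᵐ by πⁱ_k = w_k if ε_{ik} = 0 and πⁱ_k = ŵ_k if ε_{ik} = 1, and set d_i(x, w, x̂, ŵ) := F_i(ξⁱ, πⁱ) + Σ_{j ≠ i} α_{ij}(x_j - x̂_j) + Σ_k β_{ik}(w_k - ŵ_k). Then d is a decomposition function for F, i.e., the system ẋ = F(x, w) is mixed-monotone with respect to d. -/
open Set Function Filter Topology

lemma updslice_hasDerivAt {p : ℕ} (x : Fin p → ℝ) (j : Fin p) (u : ℝ) :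
    HasDerivAt (fun u : ℝ => Function.update x j u) (Pi.single j (1:ℝ)) u := by
  have h : (fun u : ℝ => Function.update x j u)
      = fun u => x + (u - x j) • (Pi.single j (1:ℝ) : Fin p → ℝ) := by
    funext u l
    by_cases h : l = j
    · subst h; simp
    · simp [Function.update_of_ne h, Pi.single_eq_of_ne h]
  rw [h]
  simpa using (((hasDerivAt_id u).sub_const (x j)).smul_const (Pi.single j (1:ℝ))).const_add x

lemma mono_slice {p : ℕ} {f : (Fin p → ℝ) → ℝ} (hf : Differentiable ℝ f)
    (c : ℝ) (x : Fin p → ℝ) (j : Fin p) {s t : ℝ} (hst : s ≤ t)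
    (hb : ∀ u ∈ Set.Icc s t, -c ≤ fderiv ℝ f (Function.update x j u) (Pi.single j 1)) :
    f (Function.update x j s) + c * s ≤ f (Function.update x j t) + c * t := by
  set g : ℝ → ℝ := fun u => f (Function.update x j u) + c * u with hg
  have hgd : ∀ u, HasDerivAt g (fderiv ℝ f (Function.update x j u) (Pi.single j 1) + c) u := by
    intro u
    have h1 : HasDerivAt (fun u => f (Function.update x j u))
        (fderiv ℝ f (Function.update x j u) (Pi.single j 1)) u :=
      (hf _).hasFDerivAt.comp_hasDerivAt u (updslice_hasDerivAt x j u)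
    have h2 := h1.add ((hasDerivAt_id u).const_mul c)
    rw [mul_one] at h2
    exact h2
  have hmono : MonotoneOn g (Set.Icc s t) := by
    apply monotoneOn_of_deriv_nonneg (convex_Icc s t)
    · have hd : Differentiable ℝ g := fun u => (hgd u).differentiableAt
      exact hd.continuous.continuousOn
    · exact fun u _ => ((hgd u).differentiableAt).differentiableWithinAt
    · intro u hu
      rw [interior_Icc] at hu
      rw [(hgd u).deriv]
      have := hb u (Set.mem_Icc_of_Ioo hu)
      linarith
  exact hmono (Set.left_mem_Icc.2 hst) (Set.right_mem_Icc.2 hst) hst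

lemma anti_slice {p : ℕ} {f : (Fin p → ℝ) → ℝ} (hf : Differentiable ℝ f)
    (c : ℝ) (x : Fin p → ℝ) (j : Fin p) {s t : ℝ} (hst : s ≤ t)
    (hb : ∀ u ∈ Set.Icc s t, fderiv ℝ f (Function.update x j u) (Pi.single j 1) ≤ c) :
    f (Function.update x j t) - c * t ≤ f (Function.update x j s) - c * s := by
  have key := mono_slice (f := fun y => -f y) hf.neg c x j hst ?_
  · linarith
  · intro u hu
    rw [fderiv_fun_neg]
    simpa using hb u hu

/-- Special Case 1: if `F` is continuously differentiable and each
off-diagonal entry of `∂F/∂x` and each entry of `∂F/∂w` is bounded below (flag `= false`)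
or above (flag `= true`) by constants `α`, `β`, then the construction
`dᵢ(x, w, x̂, ŵ) = Fᵢ(ξⁱ, πⁱ) + Σ_{j ≠ i} α i j (xⱼ - x̂ⱼ) + Σ_k β i k (w_k - ŵ_k)`
is a decomposition function for `F`, i.e. `ẋ = F(x, w)` is mixed-monotone w.r.t. `d`. -/
theorem specialcase1_jacobian_bounds
    {n m : ℕ} (wl wu : Fin m → ℝ) (hwlu : wl ≤ wu)
    (F : (Fin n → ℝ) → (Fin m → ℝ) → (Fin n → ℝ))
    (hF : ContDiff ℝ 1 (fun p : (Fin n → ℝ) × (Fin m → ℝ) => F p.1 p.2))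
    (δ : Fin n → Fin n → Bool) (α : Fin n → Fin n → ℝ) (hα : ∀ i j, 0 ≤ α i j)
    (ε : Fin n → Fin m → Bool) (β : Fin n → Fin m → ℝ) (hβ : ∀ i k, 0 ≤ β i k)
    -- flag false: ∂Fᵢ/∂xⱼ ≥ -α i j everywhere
    (hJx0 : ∀ i j : Fin n, i ≠ j → δ i j = false →
      ∀ x : Fin n → ℝ, ∀ w ∈ Set.Icc wl wu,
        -(α i j) ≤ fderiv ℝ (fun y => F y w i) x (Pi.single j (1:ℝ)))
    -- flag true: ∂Fᵢ/∂xⱼ ≤ α i j everywhere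
    (hJx1 : ∀ i j : Fin n, i ≠ j → δ i j = true →
      ∀ x : Fin n → ℝ, ∀ w ∈ Set.Icc wl wu,
        fderiv ℝ (fun y => F y w i) x (Pi.single j (1:ℝ)) ≤ α i j)
    -- flag false: ∂Fᵢ/∂w_k ≥ -β i k everywhere
    (hJw0 : ∀ (i : Fin n) (k : Fin m), ε i k = false →
      ∀ x : Fin n → ℝ, ∀ w ∈ Set.Icc wl wu,
        -(β i k) ≤ fderiv ℝ (fun v => F x v i) w (Pi.single k (1:ℝ)))
    -- flag true: ∂Fᵢ/∂w_k ≤ β i k everywhere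
    (hJw1 : ∀ (i : Fin n) (k : Fin m), ε i k = true →
      ∀ x : Fin n → ℝ, ∀ w ∈ Set.Icc wl wu,
        fderiv ℝ (fun v => F x v i) w (Pi.single k (1:ℝ)) ≤ β i k) :
    IsDecompositionFunction wl wu F
      (fun x w xh wh => fun i =>
        F (fun j => if j = i then x i else if δ i j then xh j else x j)
          (fun k => if ε i k then wh k else w k) i
        + ∑ j ∈ Finset.univ.filter (fun j => j ≠ i), α i j * (x j - xh j)
        + ∑ k : Fin m, β i k * (w k - wh k)) := by
  have hFd : Differentiable ℝ (fun p : (Fin n → ℝ) × (Fin m → ℝ) => F p.1 p.2) :=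
    hF.differentiable one_ne_zero
  have hFx : ∀ (w : Fin m → ℝ) (i : Fin n), Differentiable ℝ (fun y : Fin n → ℝ => F y w i) := by
    intro w i
    have h1 : Differentiable ℝ (fun y : Fin n → ℝ => F y w) :=
      hFd.comp (differentiable_id.prodMk (differentiable_const w))
    exact differentiable_pi.1 h1 i
  have hFw : ∀ (x : Fin n → ℝ) (i : Fin n), Differentiable ℝ (fun v : Fin m → ℝ => F x v i) := by
    intro x i
    have h1 : Differentiable ℝ (fun v : Fin m → ℝ => F x v) :=
      hFd.comp ((differentiable_const x).prodMk differentiable_id)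
    exact differentiable_pi.1 h1 i
  refine ⟨?_, ?_, ?_, ?_, ?_, ?_⟩
  -- 1. Locally Lipschitz
  · have hC : ContDiff ℝ 1 (fun p : ((Fin n → ℝ) × (Fin m → ℝ)) × ((Fin n → ℝ) × (Fin m → ℝ)) =>
        (fun i => F (fun j => if j = i then p.1.1 i else if δ i j then p.2.1 j else p.1.1 j)
          (fun k => if ε i k then p.2.2 k else p.1.2 k) i
          + ∑ j ∈ Finset.univ.filter (fun j => j ≠ i), α i j * (p.1.1 j - p.2.1 j)
          + ∑ k : Fin m, β i k * (p.1.2 k - p.2.2 k) : Fin n → ℝ)) := by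
      apply contDiff_pi.2
      intro i
      apply ContDiff.add
      apply ContDiff.add
      · have hξ : ContDiff ℝ 1 (fun p : ((Fin n → ℝ) × (Fin m → ℝ)) × ((Fin n → ℝ) × (Fin m → ℝ)) =>
            (fun j => if j = i then p.1.1 i else if δ i j then p.2.1 j else p.1.1 j : Fin n → ℝ)) := by
          apply contDiff_pi.2
          intro j
          split_ifs <;> fun_prop
        have hπ : ContDiff ℝ 1 (fun p : ((Fin n → ℝ) × (Fin m → ℝ)) × ((Fin n → ℝ) × (Fin m → ℝ)) =>
            (fun k => if ε i k then p.2.2 k else p.1.2 k : Fin m → ℝ)) := by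
          apply contDiff_pi.2
          intro k
          split_ifs <;> fun_prop
        exact (contDiff_pi.1 (hF.comp (hξ.prodMk hπ))) i
      · apply ContDiff.sum
        intro j _
        fun_prop
      · apply ContDiff.sum
        intro k _
        fun_prop
    exact hC.locallyLipschitz
  -- 2. diagonal
  · intro x w hw
    funext i
    dsimp only
    have hξ : (fun j => if j = i then x i else if δ i j then x j else x j) = x := by
      funext j
      by_cases h : j = i
      · simp [h]
      · simp [h]
    rw [hξ]
    simp
  -- 3. nondecreasing in x_j, j ≠ i
  · intro i j hji x xh s t hst w hw wh hwh
    dsimp only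
    set π : Fin m → ℝ := fun k => if ε i k then wh k else w k with hπdef
    have hπmem : π ∈ Set.Icc wl wu := by
      constructor <;> intro k <;> by_cases h : ε i k = true <;>
        simp only [hπdef, h, if_true, if_false]
      · exact hwh.1 k
      · exact hw.1 k
      · exact hwh.2 k
      · exact hw.2 k
    have hjmem : j ∈ Finset.univ.filter (fun j' => j' ≠ i) := by simp [hji]
    have hsum : ∀ u : ℝ,
        (∑ j' ∈ Finset.univ.filter (fun j' => j' ≠ i), α i j' * (Function.update x j u j' - xh j'))
        = α i j * (u - xh j)
          + ∑ j' ∈ (Finset.univ.filter (fun j' => j' ≠ i)).erase j, α i j' * (x j' - xh j') := by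
      intro u
      rw [← Finset.add_sum_erase _ _ hjmem, Function.update_self]
      congr 1
      exact Finset.sum_congr rfl fun j' hj' => by
        rw [Function.update_of_ne (Finset.ne_of_mem_erase hj')]
    by_cases hδ : δ i j = true
    · have hξeq : ∀ u : ℝ,
          (fun l => if l = i then Function.update x j u i else if δ i l then xh l else Function.update x j u l)
          = (fun l => if l = i then x i else if δ i l then xh l else x l) := by
        intro u; funext l
        by_cases h1 : l = i
        · simp [h1, Function.update_of_ne (Ne.symm hji)]
        · by_cases h2 : δ i l = true
          · simp [h1, h2]
          · have hlj : l ≠ j := fun hc => h1 (by rw [hc] at h2; exact absurd hδ h2) |>.elim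
            simp [h1, h2, Function.update_of_ne hlj]
      rw [hξeq s, hξeq t, hsum s, hsum t]
      have h1 := mul_le_mul_of_nonneg_left (by linarith : s - xh j ≤ t - xh j) (hα i j)
      linarith
    · have hδ' : δ i j = false := by simpa using hδ
      set ξ₀ : Fin n → ℝ := fun l => if l = i then x i else if δ i l then xh l else x l with hξ₀
      have hξeq : ∀ u : ℝ,
          (fun l => if l = i then Function.update x j u i else if δ i l then xh l else Function.update x j u l)
          = Function.update ξ₀ j u := by
        intro u; funext l
        by_cases h2 : l = j
        · subst h2
          simp [hji, hδ', hξ₀]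
        · by_cases h1 : l = i
          · simp [h1, hξ₀, Function.update_of_ne h2, Function.update_of_ne (Ne.symm hji)]
          · by_cases h3 : δ i l = true <;>
              simp [h1, h3, hξ₀, Function.update_of_ne h2]
      rw [hξeq s, hξeq t, hsum s, hsum t]
      have hkey := mono_slice (hFx π i) (α i j) ξ₀ j hst
        (fun u _ => hJx0 i j (Ne.symm hji) hδ' (Function.update ξ₀ j u) π hπmem)
      have e1 : α i j * (s - xh j) = α i j * s - α i j * xh j := by ring
      have e2 : α i j * (t - xh j) = α i j * t - α i j * xh j := by ring
      linarith
  · intro i j x xh s t hst w hw wh hwh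
    dsimp only
    set π : Fin m → ℝ := fun k => if ε i k then wh k else w k with hπdef
    have hπmem : π ∈ Set.Icc wl wu := by
      constructor <;> intro k <;> by_cases h : ε i k = true <;>
        simp only [hπdef, h, if_true, if_false]
      · exact hwh.1 k
      · exact hw.1 k
      · exact hwh.2 k
      · exact hw.2 k
    by_cases hji : j = i
    · have hξ : ∀ u : ℝ,
          (fun l => if l = i then x i else if δ i l then Function.update xh j u l else x l)
          = (fun l => if l = i then x i else if δ i l then xh l else x l) := by
        intro u; funext l
        by_cases h1 : l = i
        · simp [h1]
        · have hlj : l ≠ j := fun hc => h1 (hc.trans hji)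
          by_cases h3 : δ i l = true <;> simp [h1, h3, Function.update_of_ne hlj]
      have hs : ∀ u : ℝ,
          (∑ j' ∈ Finset.univ.filter (fun j' => j' ≠ i), α i j' * (x j' - Function.update xh j u j'))
          = ∑ j' ∈ Finset.univ.filter (fun j' => j' ≠ i), α i j' * (x j' - xh j') := by
        intro u
        refine Finset.sum_congr rfl fun j' hj' => ?_
        have hj'i : j' ≠ i := by simpa using hj'
        rw [Function.update_of_ne (fun hc => hj'i (hc.trans hji))]
      rw [hξ s, hξ t, hs s, hs t]
    · have hjmem : j ∈ Finset.univ.filter (fun j' => j' ≠ i) := by simp [hji]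
      have hsum : ∀ u : ℝ,
          (∑ j' ∈ Finset.univ.filter (fun j' => j' ≠ i), α i j' * (x j' - Function.update xh j u j'))
          = α i j * (x j - u)
            + ∑ j' ∈ (Finset.univ.filter (fun j' => j' ≠ i)).erase j, α i j' * (x j' - xh j') := by
        intro u
        rw [← Finset.add_sum_erase _ _ hjmem, Function.update_self]
        congr 1
        exact Finset.sum_congr rfl fun j' hj' => by
          rw [Function.update_of_ne (Finset.ne_of_mem_erase hj')]
      by_cases hδ : δ i j = true
      · set ξ₀ : Fin n → ℝ := fun l => if l = i then x i else if δ i l then xh l else x l with hξ₀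
        have hξeq : ∀ u : ℝ,
            (fun l => if l = i then x i else if δ i l then Function.update xh j u l else x l)
            = Function.update ξ₀ j u := by
          intro u; funext l
          by_cases h2 : l = j
          · subst h2
            simp [hji, hδ, hξ₀]
          · by_cases h1 : l = i
            · simp [h1, hξ₀, Function.update_of_ne h2, Function.update_of_ne (Ne.symm hji)]
            · by_cases h3 : δ i l = true <;>
                simp [h1, h3, hξ₀, Function.update_of_ne h2]
        rw [hξeq s, hξeq t, hsum s, hsum t]
        have hkey := anti_slice (hFx π i) (α i j) ξ₀ j hst
          (fun u _ => hJx1 i j (Ne.symm hji) hδ (Function.update ξ₀ j u) π hπmem)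
        have e1 : α i j * (x j - s) = α i j * x j - α i j * s := by ring
        have e2 : α i j * (x j - t) = α i j * x j - α i j * t := by ring
        linarith
      · have hξeq : ∀ u : ℝ,
            (fun l => if l = i then x i else if δ i l then Function.update xh j u l else x l)
            = (fun l => if l = i then x i else if δ i l then xh l else x l) := by
          intro u; funext l
          by_cases h1 : l = i
          · simp [h1]
          · by_cases h3 : δ i l = true
            · have hlj : l ≠ j := fun hc => hδ (by rw [← hc]; exact h3)
              simp [h1, h3, Function.update_of_ne hlj]
            · simp [h1, h3]
        rw [hξeq s, hξeq t, hsum s, hsum t]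
        have h1 := mul_le_mul_of_nonneg_left (by linarith : x j - t ≤ x j - s) (hα i j)
        linarith
  · intro i k x xh s t hs hst ht w hw wh hwh
    dsimp only
    have hsumw : ∀ u : ℝ,
        (∑ k' : Fin m, β i k' * (Function.update w k u k' - wh k'))
        = β i k * (u - wh k) + ∑ k' ∈ Finset.univ.erase k, β i k' * (w k' - wh k') := by
      intro u
      rw [← Finset.add_sum_erase _ _ (Finset.mem_univ k), Function.update_self]
      congr 1
      exact Finset.sum_congr rfl fun k' hk' => by
        rw [Function.update_of_ne (Finset.ne_of_mem_erase hk')]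
    by_cases hε : ε i k = true
    · have hπeq : ∀ u : ℝ,
          (fun k' => if ε i k' then wh k' else Function.update w k u k')
          = (fun k' => if ε i k' then wh k' else w k') := by
        intro u; funext k'
        by_cases h1 : ε i k' = true
        · simp [h1]
        · have hkk : k' ≠ k := fun hc => h1 (by rw [hc]; exact hε)
          simp [h1, Function.update_of_ne hkk]
      rw [hπeq s, hπeq t, hsumw s, hsumw t]
      have h1 := mul_le_mul_of_nonneg_left (by linarith : s - wh k ≤ t - wh k) (hβ i k)
      linarith
    · have hε' : ε i k = false := by simpa using hε
      set π₀ : Fin m → ℝ := fun k' => if ε i k' then wh k' else w k' with hπ₀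
      have hπeq : ∀ u : ℝ,
          (fun k' => if ε i k' then wh k' else Function.update w k u k')
          = Function.update π₀ k u := by
        intro u; funext k'
        by_cases h2 : k' = k
        · subst h2
          simp [hε', hπ₀]
        · by_cases h1 : ε i k' = true <;>
            simp [h1, hπ₀, Function.update_of_ne h2]
      have hmem : ∀ u ∈ Set.Icc s t, Function.update π₀ k u ∈ Set.Icc wl wu := by
        intro u hu
        constructor <;> intro k'
        · by_cases h2 : k' = k
          · subst h2
            rw [Function.update_self]
            exact le_trans hs hu.1
          · rw [Function.update_of_ne h2]
            by_cases h1 : ε i k' = true <;> simp only [hπ₀, h1, if_true, if_false]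
            · exact hwh.1 k'
            · exact hw.1 k'
        · by_cases h2 : k' = k
          · subst h2
            rw [Function.update_self]
            exact le_trans hu.2 ht
          · rw [Function.update_of_ne h2]
            by_cases h1 : ε i k' = true <;> simp only [hπ₀, h1, if_true, if_false]
            · exact hwh.2 k'
            · exact hw.2 k'
      rw [hπeq s, hπeq t, hsumw s, hsumw t]
      set ξ₀ : Fin n → ℝ := fun l => if l = i then x i else if δ i l then xh l else x l with hξ₀
      have hkey := mono_slice (hFw ξ₀ i) (β i k) π₀ k hst
        (fun u hu => hJw0 i k hε' ξ₀ (Function.update π₀ k u) (hmem u hu))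
      have e1 : β i k * (s - wh k) = β i k * s - β i k * wh k := by ring
      have e2 : β i k * (t - wh k) = β i k * t - β i k * wh k := by ring
      linarith
  · intro i k x xh s t hs hst ht w hw wh hwh
    dsimp only
    have hsumw : ∀ u : ℝ,
        (∑ k' : Fin m, β i k' * (w k' - Function.update wh k u k'))
        = β i k * (w k - u) + ∑ k' ∈ Finset.univ.erase k, β i k' * (w k' - wh k') := by
      intro u
      rw [← Finset.add_sum_erase _ _ (Finset.mem_univ k), Function.update_self]
      congr 1
      exact Finset.sum_congr rfl fun k' hk' => by
        rw [Function.update_of_ne (Finset.ne_of_mem_erase hk')]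
    by_cases hε : ε i k = true
    · set π₀ : Fin m → ℝ := fun k' => if ε i k' then wh k' else w k' with hπ₀
      have hπeq : ∀ u : ℝ,
          (fun k' => if ε i k' then Function.update wh k u k' else w k')
          = Function.update π₀ k u := by
        intro u; funext k'
        by_cases h2 : k' = k
        · subst h2
          simp [hε, hπ₀]
        · by_cases h1 : ε i k' = true <;>
            simp [h1, hπ₀, Function.update_of_ne h2]
      have hmem : ∀ u ∈ Set.Icc s t, Function.update π₀ k u ∈ Set.Icc wl wu := by
        intro u hu
        constructor <;> intro k'
        · by_cases h2 : k' = k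
          · subst h2
            rw [Function.update_self]
            exact le_trans hs hu.1
          · rw [Function.update_of_ne h2]
            by_cases h1 : ε i k' = true <;> simp only [hπ₀, h1, if_true, if_false]
            · exact hwh.1 k'
            · exact hw.1 k'
        · by_cases h2 : k' = k
          · subst h2
            rw [Function.update_self]
            exact le_trans hu.2 ht
          · rw [Function.update_of_ne h2]
            by_cases h1 : ε i k' = true <;> simp only [hπ₀, h1, if_true, if_false]
            · exact hwh.2 k'
            · exact hw.2 k'
      rw [hπeq s, hπeq t, hsumw s, hsumw t]
      set ξ₀ : Fin n → ℝ := fun l => if l = i then x i else if δ i l then xh l else x l with hξ₀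
      have hkey := anti_slice (hFw ξ₀ i) (β i k) π₀ k hst
        (fun u hu => hJw1 i k hε ξ₀ (Function.update π₀ k u) (hmem u hu))
      have e1 : β i k * (w k - s) = β i k * w k - β i k * s := by ring
      have e2 : β i k * (w k - t) = β i k * w k - β i k * t := by ring
      linarith
    · have hπeq : ∀ u : ℝ,
          (fun k' => if ε i k' then Function.update wh k u k' else w k')
          = (fun k' => if ε i k' then wh k' else w k') := by
        intro u; funext k'
        by_cases h1 : ε i k' = true
        · have hkk : k' ≠ k := fun hc => hε (by rw [← hc]; exact h1)
          simp [h1, Function.update_of_ne hkk]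
        · simp [h1]
      rw [hπeq s, hπeq t, hsumw s, hsumw t]
      have h1 := mul_le_mul_of_nonneg_left (by linarith : w k - t ≤ w k - s) (hβ i k)
      linarith
end

section
/- (Example 1) Consider F : ℝ² → ℝ² given by F(x) = (x₂² + 2, x₁) (no disturbance). Define d : ℝ² × ℝ² → ℝ² by d₂(x, x̂) = x₁ and d₁(x, x̂) = x₂² + 2 if x₂ ≥ 0 and x₂ ≥ -x̂₂; d₁(x, x̂) = x̂₂² + 2 if x̂₂ ≤ 0 and x₂ < -x̂₂; d₁(x, x̂) = x₂·x̂₂ + 2 if x₂ < 0 and x̂₂ > 0. Then d is well-defined and locally Lipschitz on ℝ² × ℝ², and d is a decomposition function for F: d(x, x) = F(x) for all x; d₁(x, x̂) is nondecreasing in x₂ and d₂ is nondecreasing in x₁; and each dᵢ is nonincreasing in every component of x̂. -/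
open Set Metric

/-- Product of two locally Lipschitz real-valued functions is locally Lipschitz. -/
lemma locallyLipschitz_mul_real {α : Type*} [MetricSpace α] {f g : α → ℝ}
    (hf : LocallyLipschitz f) (hg : LocallyLipschitz g) :
    LocallyLipschitz (fun x => f x * g x) := by
  intro x
  obtain ⟨Kf, t, ht, hKf⟩ := hf x
  obtain ⟨Kg, u, hu, hKg⟩ := hg x
  set F : ℝ := |f x| + Kf with hF
  set G : ℝ := |g x| + Kg with hG
  have hF0 : (0:ℝ) ≤ F := by positivity
  have hG0 : (0:ℝ) ≤ G := by positivity
  refine ⟨(F * Kg + G * Kf).toNNReal, t ∩ u ∩ closedBall x 1,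
    Filter.inter_mem (Filter.inter_mem ht hu) (closedBall_mem_nhds x one_pos), ?_⟩
  have hxt : x ∈ t := mem_of_mem_nhds ht
  have hxu : x ∈ u := mem_of_mem_nhds hu
  have hfb : ∀ y ∈ t ∩ u ∩ closedBall x 1, |f y| ≤ F := by
    intro y hy
    have h1 : dist (f y) (f x) ≤ Kf * dist y x := hKf.dist_le_mul y hy.1.1 x hxt
    have h2 : dist y x ≤ 1 := mem_closedBall.mp hy.2
    have := abs_sub_abs_le_abs_sub (f y) (f x)
    rw [Real.dist_eq] at h1
    nlinarith [Kf.coe_nonneg, dist_nonneg (x := y) (y := x)]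
  have hgb : ∀ y ∈ t ∩ u ∩ closedBall x 1, |g y| ≤ G := by
    intro y hy
    have h1 : dist (g y) (g x) ≤ Kg * dist y x := hKg.dist_le_mul y hy.1.2 x hxu
    have h2 : dist y x ≤ 1 := mem_closedBall.mp hy.2
    have := abs_sub_abs_le_abs_sub (g y) (g x)
    rw [Real.dist_eq] at h1
    nlinarith [Kg.coe_nonneg, dist_nonneg (x := y) (y := x)]
  apply LipschitzOnWith.of_dist_le_mul
  intro y hy z hz
  have h1 : |f y - f z| ≤ Kf * dist y z := by
    have := hKf.dist_le_mul y hy.1.1 z hz.1.1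
    rwa [Real.dist_eq] at this
  have h2 : |g y - g z| ≤ Kg * dist y z := by
    have := hKg.dist_le_mul y hy.1.2 z hz.1.2
    rwa [Real.dist_eq] at this
  have hfy := hfb y hy
  have hgz := hgb z hz
  rw [Real.dist_eq, Real.coe_toNNReal _ (by positivity)]
  calc |f y * g y - f z * g z| = |f y * (g y - g z) + g z * (f y - f z)| := by ring_nf
    _ ≤ |f y * (g y - g z)| + |g z * (f y - f z)| := abs_add_le _ _
    _ = |f y| * |g y - g z| + |g z| * |f y - f z| := by rw [abs_mul, abs_mul]
    _ ≤ F * (Kg * dist y z) + G * (Kf * dist y z) := by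
        have := abs_nonneg (f y); have := abs_nonneg (g z)
        have := abs_nonneg (g y - g z); have := abs_nonneg (f y - f z)
        have := Kf.coe_nonneg; have := Kg.coe_nonneg
        have := dist_nonneg (x := y) (y := z)
        gcongr
    _ = (F * Kg + G * Kf) * dist y z := by ring



/-- The vector field of Example 1: `F(x) = (x₂² + 2, x₁)`. -/
noncomputable def FEx1 (x : ℝ × ℝ) : ℝ × ℝ := (x.2 ^ 2 + 2, x.1)

/-- The piecewise decomposition function of Example 1. -/
noncomputable def dEx1 (x xh : ℝ × ℝ) : ℝ × ℝ :=
  (if 0 ≤ x.2 ∧ -xh.2 ≤ x.2 then x.2 ^ 2 + 2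
    else if xh.2 ≤ 0 ∧ x.2 < -xh.2 then xh.2 ^ 2 + 2
    else x.2 * xh.2 + 2,
   x.1)

/-- Closed form for the first component of `dEx1`. -/
noncomputable def gEx1 (a b : ℝ) : ℝ :=
  max (max a (-b)) 0 * max (max a (-b)) 0 + min a 0 * max b 0 + 2

lemma dEx1_eq (x xh : ℝ × ℝ) : dEx1 x xh = (gEx1 x.2 xh.2, x.1) := by
  unfold dEx1 gEx1
  set a := x.2; set b := xh.2
  split_ifs with h1 h2
  · rw [max_eq_left h1.2, max_eq_left h1.1, min_eq_right h1.1]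
    norm_num; ring
  · rw [max_eq_right h2.2.le, max_eq_left (neg_nonneg.mpr h2.1), max_eq_right h2.1]
    ring
  · push_neg at h1 h2
    have ha : a < 0 := by
      by_contra h
      push_neg at h
      have h3 : a < -b := h1 h
      rcases le_or_gt b 0 with hb | hb
      · linarith [h2 hb]
      · linarith
    have hb : 0 < b := by
      by_contra h
      push_neg at h
      linarith [h2 h]
    rw [max_eq_right (max_le ha.le (by linarith)), min_eq_left ha.le, max_eq_left hb.le]
    ring

lemma gEx1_mono {s t b : ℝ} (h : s ≤ t) : gEx1 s b ≤ gEx1 t b := by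
  unfold gEx1
  have h1 : max (max s (-b)) 0 ≤ max (max t (-b)) 0 :=
    max_le_max (max_le_max h le_rfl) le_rfl
  have h0 : (0:ℝ) ≤ max (max s (-b)) 0 := le_max_right _ _
  have h2 : min s 0 ≤ min t 0 := min_le_min h le_rfl
  have h3 : (0:ℝ) ≤ max b 0 := le_max_right _ _
  nlinarith [mul_le_mul h1 h1 h0 (le_trans h0 h1), mul_le_mul_of_nonneg_right h2 h3]

lemma gEx1_anti {a s t : ℝ} (h : s ≤ t) : gEx1 a t ≤ gEx1 a s := by
  unfold gEx1
  have h1 : max (max a (-t)) 0 ≤ max (max a (-s)) 0 :=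
    max_le_max (max_le_max le_rfl (neg_le_neg h)) le_rfl
  have h0 : (0:ℝ) ≤ max (max a (-t)) 0 := le_max_right _ _
  have h2 : max s 0 ≤ max t 0 := max_le_max h le_rfl
  have h3 : min a 0 ≤ 0 := min_le_right _ _
  nlinarith [mul_le_mul h1 h1 h0 (le_trans h0 h1)]

/-- Example 1: `dEx1` is well defined (it takes the three stated values on
the three stated regions), is locally Lipschitz, and is a decomposition function for
`F(x) = (x₂² + 2, x₁)`: it agrees with `F` on the diagonal, `d₁` is nondecreasing in `x₂`,
`d₂` is nondecreasing in `x₁`, and each `dᵢ` is nonincreasing in every component of `x̂`. -/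
theorem example1_decomposition :
    -- well-definedness: the case formulas hold on the three regions
    (∀ x xh : ℝ × ℝ,
      ((0 ≤ x.2 ∧ -xh.2 ≤ x.2) → dEx1 x xh = (x.2 ^ 2 + 2, x.1)) ∧
      ((xh.2 ≤ 0 ∧ x.2 < -xh.2) → dEx1 x xh = (xh.2 ^ 2 + 2, x.1)) ∧
      ((x.2 < 0 ∧ 0 < xh.2) → dEx1 x xh = (x.2 * xh.2 + 2, x.1))) ∧
    -- locally Lipschitz
    LocallyLipschitz (fun p : (ℝ × ℝ) × (ℝ × ℝ) => dEx1 p.1 p.2) ∧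
    -- agrees with F on the diagonal
    (∀ x : ℝ × ℝ, dEx1 x x = FEx1 x) ∧
    -- d₁ is nondecreasing in x₂
    (∀ (x1 : ℝ) (xh : ℝ × ℝ) (s t : ℝ), s ≤ t → (dEx1 (x1, s) xh).1 ≤ (dEx1 (x1, t) xh).1) ∧
    -- d₂ is nondecreasing in x₁
    (∀ (x2 : ℝ) (xh : ℝ × ℝ) (s t : ℝ), s ≤ t → (dEx1 (s, x2) xh).2 ≤ (dEx1 (t, x2) xh).2) ∧
    -- each dᵢ is nonincreasing in x̂₁
    (∀ (x : ℝ × ℝ) (b s t : ℝ), s ≤ t →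
      (dEx1 x (t, b)).1 ≤ (dEx1 x (s, b)).1 ∧ (dEx1 x (t, b)).2 ≤ (dEx1 x (s, b)).2) ∧
    -- each dᵢ is nonincreasing in x̂₂
    (∀ (x : ℝ × ℝ) (a s t : ℝ), s ≤ t →
      (dEx1 x (a, t)).1 ≤ (dEx1 x (a, s)).1 ∧ (dEx1 x (a, t)).2 ≤ (dEx1 x (a, s)).2) := by
  refine ⟨?_, ?_, ?_, ?_, ?_, ?_, ?_⟩
  · intro x xh
    refine ⟨fun h => ?_, fun h => ?_, fun h => ?_⟩
    · simp only [dEx1, if_pos h]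
    · have hn : ¬(0 ≤ x.2 ∧ -xh.2 ≤ x.2) := fun hc => absurd hc.2 (not_le.mpr h.2)
      simp only [dEx1, if_neg hn, if_pos h]
    · have hn1 : ¬(0 ≤ x.2 ∧ -xh.2 ≤ x.2) := fun hc => absurd hc.1 (not_le.mpr h.1)
      have hn2 : ¬(xh.2 ≤ 0 ∧ x.2 < -xh.2) := fun hc => absurd hc.1 (not_le.mpr h.2)
      simp only [dEx1, if_neg hn1, if_neg hn2]
  · have key : (fun p : (ℝ × ℝ) × (ℝ × ℝ) => dEx1 p.1 p.2)
        = fun p => (gEx1 p.1.2 p.2.2, p.1.1) := funext fun p => dEx1_eq _ _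
    rw [key]
    have hA : LocallyLipschitz fun p : (ℝ × ℝ) × (ℝ × ℝ) => p.1.2 :=
      (LipschitzWith.prod_snd.comp LipschitzWith.prod_fst).locallyLipschitz
    have hB : LocallyLipschitz fun p : (ℝ × ℝ) × (ℝ × ℝ) => p.2.2 :=
      (LipschitzWith.prod_snd.comp LipschitzWith.prod_snd).locallyLipschitz
    have hC : LocallyLipschitz fun p : (ℝ × ℝ) × (ℝ × ℝ) => p.1.1 :=
      (LipschitzWith.prod_fst.comp LipschitzWith.prod_fst).locallyLipschitz
    have hBneg : LocallyLipschitz fun p : (ℝ × ℝ) × (ℝ × ℝ) => -p.2.2 := hB.neg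
    have hM : LocallyLipschitz fun p : (ℝ × ℝ) × (ℝ × ℝ) => max (max p.1.2 (-p.2.2)) 0 :=
      (hA.max hBneg).max_const 0
    have h1 : LocallyLipschitz fun p : (ℝ × ℝ) × (ℝ × ℝ) =>
        max (max p.1.2 (-p.2.2)) 0 * max (max p.1.2 (-p.2.2)) 0 :=
      locallyLipschitz_mul_real hM hM
    have h2 : LocallyLipschitz fun p : (ℝ × ℝ) × (ℝ × ℝ) => min p.1.2 0 * max p.2.2 0 :=
      locallyLipschitz_mul_real (hA.min_const 0) (hB.max_const 0)
    exact ((h1.add h2).add (LocallyLipschitz.const 2)).prodMk hC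
  · intro x
    simp only [dEx1, FEx1]
    rcases le_or_gt 0 x.2 with h | h
    · rw [if_pos ⟨h, by linarith⟩]
    · rw [if_neg (fun hc => absurd hc.1 (not_le.mpr h)), if_pos ⟨h.le, by linarith⟩]
  · intro x1 xh s t h
    rw [dEx1_eq, dEx1_eq]
    simpa using gEx1_mono (b := xh.2) h
  · intro x2 xh s t h
    rw [dEx1_eq, dEx1_eq]
    simpa using h
  · intro x b s t h
    constructor <;> simp [dEx1_eq]
  · intro x a s t h
    rw [dEx1_eq, dEx1_eq]
    exact ⟨by simpa using gEx1_anti (a := x.2) h, le_refl _⟩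
end

section
/- Suppose F is mixed-monotone with respect to a decomposition function d. Then the deterministic embedding system is monotone with respect to the southeast order: if (x, x̂), (y, ŷ) : [0, T] → ℝⁿ × ℝⁿ are both solutions of the ODE (ẋ, ẋ̂) = e(x, x̂) := (d(x, w̲, x̂, w̄), d(x̂, w̄, x, w̲)) and (x(0), x̂(0)) ⪯_SE (y(0), ŷ(0)), then (x(t), x̂(t)) ⪯_SE (y(t), ŷ(t)) for all t ∈ [0, T]. -/
open Set Function Filter Topology

section Aux

lemma update_mono_chain {n : ℕ} (g : (Fin n → ℝ) → ℝ) (a b : Fin n → ℝ) (hab : a ≤ b)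
    (h : ∀ j : Fin n, a j = b j ∨ ∀ (c : Fin n → ℝ) (s t : ℝ), s ≤ t →
      g (Function.update c j s) ≤ g (Function.update c j t)) :
    g a ≤ g b := by
  have key : ∀ s : Finset (Fin n), g a ≤ g (fun j => if j ∈ s then b j else a j) := by
    intro s
    induction s using Finset.induction_on with
    | empty => simp
    | insert j s hj ih =>
      refine ih.trans ?_
      have h1 : (fun k => if k ∈ insert j s then b k else a k)
          = Function.update (fun k => if k ∈ s then b k else a k) j (b j) := by
        funext k
        by_cases hk : k = j
        · subst hk; simp [Function.update, hj]
        · simp [Function.update, hk, Finset.mem_insert]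
      have h2 : (fun k => if k ∈ s then b k else a k)
          = Function.update (fun k => if k ∈ s then b k else a k) j (a j) := by
        funext k
        by_cases hk : k = j
        · subst hk; simp [Function.update, hj]
        · simp [Function.update, hk]
      rcases h j with hj' | hj'
      · rw [h1, ← hj', ← h2]
      · rw [h1]; nth_rewrite 1 [h2]; exact hj' _ _ _ (hab j)
  have := key Finset.univ
  simpa using this

lemma locallyLipschitz_bound_on_compact
    {α β : Type*} [MetricSpace α] [MetricSpace β] {f : α → β}
    (hf : LocallyLipschitz f) {K : Set α} (hK : IsCompact K) :
    ∃ L : ℝ, 0 ≤ L ∧ ∀ a ∈ K, ∀ b ∈ K, dist (f a) (f b) ≤ L * dist a b := by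
  rcases K.eq_empty_or_nonempty with rfl | ⟨z, hz⟩
  · exact ⟨0, le_rfl, by simp⟩
  have hfc := hf.continuous
  choose Kc tc htc hlip using hf
  obtain ⟨F, hFK, hcover⟩ := hK.elim_nhds_subcover (fun x => interior (tc x))
    (fun x _ => interior_mem_nhds.2 (htc x))
  have hcover' : K ⊆ ⋃ i : F, interior (tc i) := by
    intro p hp
    rcases mem_iUnion₂.1 (hcover hp) with ⟨x, hxF, hx⟩
    exact mem_iUnion.2 ⟨⟨x, hxF⟩, hx⟩
  obtain ⟨δ, hδ, hball⟩ := lebesgue_number_lemma_of_metric hK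
    (fun i : F => isOpen_interior) hcover'
  obtain ⟨M, hM⟩ := Metric.isBounded_iff.1 (hK.image hfc).isBounded
  have hM0 : 0 ≤ M := by
    have := hM (mem_image_of_mem f hz) (mem_image_of_mem f hz)
    simpa using this
  set L0 : NNReal := F.sup Kc with hL0
  refine ⟨max (L0 : ℝ) (M / δ), le_trans L0.coe_nonneg (le_max_left _ _), ?_⟩
  intro a ha b hb
  rcases lt_or_ge (dist a b) δ with hd | hd
  · obtain ⟨i, hi⟩ := hball a ha
    have hai : a ∈ tc i := interior_subset (hi (Metric.mem_ball_self hδ))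
    have hbi : b ∈ tc i := interior_subset (hi (by simpa [Metric.mem_ball, dist_comm] using hd))
    calc dist (f a) (f b) ≤ (Kc i : ℝ) * dist a b := (hlip i).dist_le_mul a hai b hbi
      _ ≤ (L0 : ℝ) * dist a b := by
          gcongr
          exact_mod_cast NNReal.coe_le_coe.2 (Finset.le_sup i.2)
      _ ≤ max (L0 : ℝ) (M / δ) * dist a b := by gcongr; exact le_max_left _ _
  · have h1 : dist (f a) (f b) ≤ M := hM (mem_image_of_mem f ha) (mem_image_of_mem f hb)
    have h2 : M = (M / δ) * δ := (div_mul_cancel₀ M (ne_of_gt hδ)).symm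
    calc dist (f a) (f b) ≤ M := h1
      _ = (M / δ) * δ := h2
      _ ≤ (M / δ) * dist a b := mul_le_mul_of_nonneg_left hd (div_nonneg hM0 hδ.le)
      _ ≤ max (L0 : ℝ) (M / δ) * dist a b := by gcongr; exact le_max_right _ _

lemma le_integral_of_deriv_le (w w' g : ℝ → ℝ) (t : ℝ) (ht : 0 ≤ t)
    (hw : ∀ s ∈ Set.Icc 0 t, HasDerivAt w (w' s) s)
    (hw' : ContinuousOn w' (Set.Icc 0 t))
    (hg : ContinuousOn g (Set.Icc 0 t))
    (hg0 : ∀ s ∈ Set.Icc 0 t, 0 ≤ g s)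
    (hw0 : w 0 ≤ 0)
    (hb : ∀ s ∈ Set.Icc 0 t, 0 ≤ w s → w' s ≤ g s) :
    w t ≤ ∫ s in (0:ℝ)..t, g s := by
  by_cases hwt : w t ≤ 0
  · exact hwt.trans (intervalIntegral.integral_nonneg ht hg0)
  push_neg at hwt
  have hwc : ContinuousOn w (Set.Icc 0 t) :=
    fun s hs => (hw s hs).continuousAt.continuousWithinAt
  set S : Set ℝ := Set.Icc 0 t ∩ w ⁻¹' (Set.Iic 0) with hS
  have hScl : IsClosed S :=
    ContinuousOn.preimage_isClosed_of_isClosed hwc isClosed_Icc isClosed_Iic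
  have hScomp : IsCompact S :=
    (isCompact_Icc).of_isClosed_subset hScl Set.inter_subset_left
  have hS0 : (0:ℝ) ∈ S := ⟨⟨le_rfl, ht⟩, hw0⟩
  set s₀ : ℝ := sSup S with hs₀def
  have hs₀S : s₀ ∈ S := hScomp.sSup_mem ⟨0, hS0⟩
  have hs₀Icc : s₀ ∈ Set.Icc 0 t := hs₀S.1
  have hws₀ : w s₀ ≤ 0 := hs₀S.2
  have hs₀t : s₀ < t := lt_of_le_of_ne hs₀Icc.2 (fun h => by rw [h] at hws₀; linarith)
  have hbdd : BddAbove S := hScomp.bddAbove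
  have hpos : ∀ s ∈ Set.Ioc s₀ t, 0 < w s := by
    intro s hs
    by_contra hle
    push_neg at hle
    have hsS : s ∈ S := ⟨⟨le_trans hs₀Icc.1 hs.1.le, hs.2⟩, hle⟩
    exact absurd (le_csSup hbdd hsS) (not_le.2 hs.1)
  have hws₀0 : w s₀ = 0 := by
    refine le_antisymm hws₀ ?_
    have htend : Filter.Tendsto w (nhdsWithin s₀ (Set.Ioi s₀)) (nhds (w s₀)) :=
      ((hw s₀ hs₀Icc).continuousAt.tendsto).mono_left nhdsWithin_le_nhds
    refine ge_of_tendsto htend ?_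
    filter_upwards [Ioc_mem_nhdsGT_of_mem ⟨le_rfl, hs₀t⟩] with s hs
    exact (hpos s hs).le
  have hsub : Set.Icc s₀ t ⊆ Set.Icc 0 t := Set.Icc_subset_Icc hs₀Icc.1 le_rfl
  have hw'int : IntervalIntegrable w' MeasureTheory.volume s₀ t :=
    ContinuousOn.intervalIntegrable (by rw [Set.uIcc_of_le hs₀t.le]; exact hw'.mono hsub)
  have hgint : IntervalIntegrable g MeasureTheory.volume s₀ t :=
    ContinuousOn.intervalIntegrable (by rw [Set.uIcc_of_le hs₀t.le]; exact hg.mono hsub)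
  have hgint0 : IntervalIntegrable g MeasureTheory.volume 0 s₀ :=
    ContinuousOn.intervalIntegrable (by rw [Set.uIcc_of_le hs₀Icc.1]; exact hg.mono (Set.Icc_subset_Icc le_rfl hs₀Icc.2))
  have hftc : ∫ s in s₀..t, w' s = w t - w s₀ := by
    apply intervalIntegral.integral_eq_sub_of_hasDerivAt
    · intro s hs
      rw [Set.uIcc_of_le hs₀t.le] at hs
      exact hw s (hsub hs)
    · exact hw'int
  have hmono : ∫ s in s₀..t, w' s ≤ ∫ s in s₀..t, g s := by
    apply intervalIntegral.integral_mono_on hs₀t.le hw'int hgint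
    intro s hs
    rcases eq_or_lt_of_le hs.1 with heq | hlt
    · exact hb s (hsub hs) (by rw [← heq, hws₀0])
    · exact hb s (hsub hs) (hpos s ⟨hlt, hs.2⟩).le
  have hsplit : (∫ s in (0:ℝ)..s₀, g s) + ∫ s in s₀..t, g s = ∫ s in (0:ℝ)..t, g s :=
    intervalIntegral.integral_add_adjacent_intervals hgint0 hgint
  have hfirst : 0 ≤ ∫ s in (0:ℝ)..s₀, g s :=
    intervalIntegral.integral_nonneg hs₀Icc.1
      (fun s hs => hg0 s ⟨hs.1, hs.2.trans hs₀Icc.2⟩)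
  have : w t = ∫ s in s₀..t, w' s := by rw [hftc, hws₀0]; ring
  linarith

lemma gronwall_zero_s19 (ψ : ℝ → ℝ) (T C : ℝ) (hT : 0 ≤ T) (hC : 0 ≤ C)
    (hψc : ContinuousOn ψ (Set.Icc 0 T))
    (hψ0 : ∀ t ∈ Set.Icc 0 T, 0 ≤ ψ t)
    (hkey : ∀ t ∈ Set.Icc 0 T, ψ t ≤ C * ∫ s in (0:ℝ)..t, ψ s) :
    ∀ t ∈ Set.Icc 0 T, ψ t = 0 := by
  set Φ : ℝ → ℝ := fun t => ∫ s in (0:ℝ)..t, ψ s with hΦdef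
  have hintT : IntervalIntegrable ψ MeasureTheory.volume 0 T :=
    ContinuousOn.intervalIntegrable (by rwa [Set.uIcc_of_le hT])
  have hint : ∀ t ∈ Set.Icc 0 T, IntervalIntegrable ψ MeasureTheory.volume 0 t := by
    intro t ht
    exact ContinuousOn.intervalIntegrable
      (by rw [Set.uIcc_of_le ht.1]; exact hψc.mono (Set.Icc_subset_Icc le_rfl ht.2))
  have hΦ0 : Φ 0 = 0 := intervalIntegral.integral_same
  have hΦnonneg : ∀ t ∈ Set.Icc 0 T, 0 ≤ Φ t := by
    intro t ht
    exact intervalIntegral.integral_nonneg ht.1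
      (fun s hs => hψ0 s ⟨hs.1, hs.2.trans ht.2⟩)
  have hΦcont : ContinuousOn Φ (Set.Icc 0 T) := by
    have := intervalIntegral.continuousOn_primitive_interval' hintT
      (Set.left_mem_uIcc (a := (0:ℝ)) (b := T))
    rwa [Set.uIcc_of_le hT] at this
  have hΦzero : ∀ t ∈ Set.Icc 0 T, Φ t = 0 := by
    set g : ℝ → ℝ := fun t => Φ t * Real.exp (-C * t) with hgdef
    have hgd : ∀ t ∈ Set.Ioo 0 T, HasDerivAt g ((ψ t - C * Φ t) * Real.exp (-C * t)) t := by
      intro t ht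
      have hto : Set.Ioo (0:ℝ) T ∈ nhds t := isOpen_Ioo.mem_nhds ht
      have hca : ContinuousAt ψ t :=
        hψc.continuousAt (Filter.mem_of_superset hto Set.Ioo_subset_Icc_self)
      have hmeas : StronglyMeasurableAtFilter ψ (nhds t) MeasureTheory.volume :=
        ContinuousOn.stronglyMeasurableAtFilter isOpen_Ioo
          (hψc.mono Set.Ioo_subset_Icc_self) t ht
      have hΦd : HasDerivAt Φ (ψ t) t :=
        intervalIntegral.integral_hasDerivAt_right (hint t ⟨ht.1.le, ht.2.le⟩) hmeas hca
      have hed : HasDerivAt (fun t => Real.exp (-C * t)) (Real.exp (-C * t) * (-C)) t := by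
        have h1 : HasDerivAt (fun t : ℝ => -C * t) (-C) t := by
          simpa using (hasDerivAt_id t).const_mul (-C)
        exact (Real.hasDerivAt_exp (-C * t)).comp t h1
      have := hΦd.mul hed
      convert this using 1
      · rfl
      · rfl
      · rfl
      · ring
    have hanti : AntitoneOn g (Set.Icc 0 T) := by
      apply antitoneOn_of_deriv_nonpos (convex_Icc 0 T)
      · exact (hΦcont.mul (Real.continuous_exp.comp (continuous_const.mul continuous_id)).continuousOn)
      · intro t ht
        rw [interior_Icc] at ht
        exact (hgd t ht).differentiableAt.differentiableWithinAt
      · intro t ht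
        rw [interior_Icc] at ht
        rw [(hgd t ht).deriv]
        have h1 := hkey t ⟨ht.1.le, ht.2.le⟩
        have h2 : (0:ℝ) < Real.exp (-C * t) := Real.exp_pos _
        nlinarith [h1, h2]
    intro t ht
    have h1 : g t ≤ g 0 := hanti (Set.left_mem_Icc.2 hT) ht ht.1
    have h2 : g 0 = 0 := by simp [hgdef, hΦ0]
    have h3 : (0:ℝ) < Real.exp (-C * t) := Real.exp_pos _
    have h4 : Φ t * Real.exp (-C * t) ≤ 0 := by rw [← h2]; exact h1
    have h5 := hΦnonneg t ht
    nlinarith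
  intro t ht
  have h1 := hkey t ht
  rw [show (∫ s in (0:ℝ)..t, ψ s) = Φ t from rfl, hΦzero t ht] at h1
  have h2 := hψ0 t ht
  linarith

end Aux

/-- the deterministic embedding system
`(ẋ, ẋ̂) = e(x, x̂) = (d(x, w̲, x̂, w̄), d(x̂, w̄, x, w̲))` is monotone with respect to the
southeast order: southeast-ordered initial conditions yield southeast-ordered solutions. -/
theorem deterministic_embedding_monotone_SE
    {n m : ℕ} (wl wu : Fin m → ℝ) (hwlu : wl ≤ wu)
    (F : (Fin n → ℝ) → (Fin m → ℝ) → (Fin n → ℝ))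
    (d : (Fin n → ℝ) → (Fin m → ℝ) → (Fin n → ℝ) → (Fin m → ℝ) → (Fin n → ℝ))
    (hd : IsDecompositionFunction wl wu F d)
    (T : ℝ) (hT : 0 ≤ T)
    (x xh y yh : ℝ → (Fin n → ℝ))
    -- (x, xh) and (y, yh) are solutions of the deterministic embedding ODE on [0, T]
    (hx : ∀ t ∈ Set.Icc (0:ℝ) T, HasDerivAt x (d (x t) wl (xh t) wu) t)
    (hxh : ∀ t ∈ Set.Icc (0:ℝ) T, HasDerivAt xh (d (xh t) wu (x t) wl) t)
    (hy : ∀ t ∈ Set.Icc (0:ℝ) T, HasDerivAt y (d (y t) wl (yh t) wu) t)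
    (hyh : ∀ t ∈ Set.Icc (0:ℝ) T, HasDerivAt yh (d (yh t) wu (y t) wl) t)
    -- southeast-ordered initial conditions
    (h0 : x 0 ≤ y 0 ∧ yh 0 ≤ xh 0) :
    ∀ t ∈ Set.Icc (0:ℝ) T, x t ≤ y t ∧ yh t ≤ xh t := by
  obtain ⟨hLL, hdiag, hmx, hmxh, hmw, hmwh⟩ := hd
  have hwl : wl ∈ Set.Icc wl wu := Set.left_mem_Icc.2 hwlu
  have hwu : wu ∈ Set.Icc wl wu := Set.right_mem_Icc.2 hwlu
  set D : ((Fin n → ℝ) × (Fin m → ℝ)) × ((Fin n → ℝ) × (Fin m → ℝ)) → (Fin n → ℝ) :=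
    fun p => d p.1.1 p.1.2 p.2.1 p.2.2 with hDdef
  -- continuity of the trajectories
  have hcx : ContinuousOn x (Set.Icc 0 T) :=
    fun t ht => (hx t ht).continuousAt.continuousWithinAt
  have hcxh : ContinuousOn xh (Set.Icc 0 T) :=
    fun t ht => (hxh t ht).continuousAt.continuousWithinAt
  have hcy : ContinuousOn y (Set.Icc 0 T) :=
    fun t ht => (hy t ht).continuousAt.continuousWithinAt
  have hcyh : ContinuousOn yh (Set.Icc 0 T) :=
    fun t ht => (hyh t ht).continuousAt.continuousWithinAt
  -- a uniform bound on the trajectories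
  obtain ⟨R1, hR1⟩ := isCompact_Icc.exists_bound_of_continuousOn hcx
  obtain ⟨R2, hR2⟩ := isCompact_Icc.exists_bound_of_continuousOn hcy
  obtain ⟨R3, hR3⟩ := isCompact_Icc.exists_bound_of_continuousOn hcxh
  obtain ⟨R4, hR4⟩ := isCompact_Icc.exists_bound_of_continuousOn hcyh
  set R : ℝ := max (max R1 R2) (max R3 R4) with hRdef
  have hRx : ∀ t ∈ Set.Icc (0:ℝ) T, ‖x t‖ ≤ R :=
    fun t ht => (hR1 t ht).trans ((le_max_left _ _).trans (le_max_left _ _))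
  have hRy : ∀ t ∈ Set.Icc (0:ℝ) T, ‖y t‖ ≤ R :=
    fun t ht => (hR2 t ht).trans ((le_max_right _ _).trans (le_max_left _ _))
  have hRxh : ∀ t ∈ Set.Icc (0:ℝ) T, ‖xh t‖ ≤ R :=
    fun t ht => (hR3 t ht).trans ((le_max_left _ _).trans (le_max_right _ _))
  have hRyh : ∀ t ∈ Set.Icc (0:ℝ) T, ‖yh t‖ ≤ R :=
    fun t ht => (hR4 t ht).trans ((le_max_right _ _).trans (le_max_right _ _))
  have hR0 : 0 ≤ R := le_trans (norm_nonneg (x 0)) (hRx 0 ⟨le_rfl, hT⟩)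
  -- compact set and a Lipschitz constant for d on it
  set K : Set (((Fin n → ℝ) × (Fin m → ℝ)) × ((Fin n → ℝ) × (Fin m → ℝ))) :=
    (Metric.closedBall (0 : Fin n → ℝ) R ×ˢ Set.Icc wl wu) ×ˢ
      (Metric.closedBall (0 : Fin n → ℝ) R ×ˢ Set.Icc wl wu) with hKdef
  have hKc : IsCompact K :=
    (((isCompact_closedBall _ _).prod isCompact_Icc).prod
      ((isCompact_closedBall _ _).prod isCompact_Icc))
  obtain ⟨L, hL0, hLip⟩ := locallyLipschitz_bound_on_compact hLL hKc
  -- the deviation functional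
  set ψ : ℝ → ℝ := fun t =>
    (∑ i, max (x t i - y t i) 0) + ∑ i, max (yh t i - xh t i) 0 with hψdef
  have hψnn : ∀ t, 0 ≤ ψ t := fun t =>
    add_nonneg (Finset.sum_nonneg fun i _ => le_max_right _ _)
      (Finset.sum_nonneg fun i _ => le_max_right _ _)
  have humax : ∀ (s : ℝ) (j : Fin n), max (x s j - y s j) 0 ≤ ψ s := by
    intro s j
    have h1 : max (x s j - y s j) 0 ≤ ∑ i, max (x s i - y s i) 0 :=
      Finset.single_le_sum (fun k _ => le_max_right (x s k - y s k) 0) (Finset.mem_univ j)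
    have h2 : (0:ℝ) ≤ ∑ i, max (yh s i - xh s i) 0 :=
      Finset.sum_nonneg fun i _ => le_max_right _ _
    simp only [hψdef]
    linarith
  have hvmax : ∀ (s : ℝ) (j : Fin n), max (yh s j - xh s j) 0 ≤ ψ s := by
    intro s j
    have h1 : max (yh s j - xh s j) 0 ≤ ∑ i, max (yh s i - xh s i) 0 :=
      Finset.single_le_sum (fun k _ => le_max_right (yh s k - xh s k) 0) (Finset.mem_univ j)
    have h2 : (0:ℝ) ≤ ∑ i, max (x s i - y s i) 0 :=
      Finset.sum_nonneg fun i _ => le_max_right _ _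
    simp only [hψdef]
    linarith
  have hψc : ContinuousOn ψ (Set.Icc 0 T) := by
    apply ContinuousOn.add
    · apply continuousOn_finset_sum
      intro i _
      have h1 : ContinuousOn (fun t => x t i - y t i) (Set.Icc 0 T) :=
        ((continuous_apply i).comp_continuousOn hcx).sub
          ((continuous_apply i).comp_continuousOn hcy)
      exact fun t ht => ((h1 t ht).max continuousWithinAt_const)
    · apply continuousOn_finset_sum
      intro i _
      have h1 : ContinuousOn (fun t => yh t i - xh t i) (Set.Icc 0 T) :=
        ((continuous_apply i).comp_continuousOn hcyh).sub
          ((continuous_apply i).comp_continuousOn hcxh)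
      exact fun t ht => ((h1 t ht).max continuousWithinAt_const)
  -- the key quasimonotonicity/Lipschitz estimate
  have hkeyd : ∀ (a b ah bh : Fin n → ℝ), ‖a‖ ≤ R → ‖b‖ ≤ R → ‖ah‖ ≤ R → ‖bh‖ ≤ R →
      ∀ (w wh : Fin m → ℝ), w ∈ Set.Icc wl wu → wh ∈ Set.Icc wl wu →
      ∀ E : ℝ, 0 ≤ E → (∀ j, max (a j - b j) 0 ≤ E) → (∀ j, max (bh j - ah j) 0 ≤ E) →
      ∀ i : Fin n, b i ≤ a i →
      d a w ah wh i - d b w bh wh i ≤ L * E := by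
    intro a b ah bh ha hb hah hbh w wh hw hwh E hE hu hv i hbi
    set c : Fin n → ℝ := fun j => max (a j) (b j) with hcdef
    set ch : Fin n → ℝ := fun j => min (ah j) (bh j) with hchdef
    have step1 : d a w ah wh i ≤ d c w ah wh i := by
      apply update_mono_chain (fun z => d z w ah wh i) a c (fun j => le_max_left _ _)
      intro j
      by_cases hji : j = i
      · left; subst hji; simp [hcdef, max_eq_left hbi]
      · right; intro cc s t hst; exact hmx i j hji cc ah s t hst w hw wh hwh
    have step2 : d c w ah wh i ≤ d c w ch wh i := by
      have h : -(d c w ch wh i) ≤ -(d c w ah wh i) :=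
        update_mono_chain (fun z => -(d c w z wh i)) ch ah (fun j => min_le_left _ _)
          (fun j => Or.inr (fun cc s t hst =>
            neg_le_neg (hmxh i j c cc s t hst w hw wh hwh)))
      linarith
    have hcR : ‖c‖ ≤ R := by
      rw [pi_norm_le_iff_of_nonneg hR0]
      intro j
      rcases le_total (a j) (b j) with h | h
      · simp only [hcdef]; rw [max_eq_right h]
        exact (norm_le_pi_norm b j).trans hb
      · simp only [hcdef]; rw [max_eq_left h]
        exact (norm_le_pi_norm a j).trans ha
    have hchR : ‖ch‖ ≤ R := by
      rw [pi_norm_le_iff_of_nonneg hR0]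
      intro j
      rcases le_total (ah j) (bh j) with h | h
      · simp only [hchdef]; rw [min_eq_left h]
        exact (norm_le_pi_norm ah j).trans hah
      · simp only [hchdef]; rw [min_eq_right h]
        exact (norm_le_pi_norm bh j).trans hbh
    have hPK : ((c, w), (ch, wh)) ∈ K :=
      ⟨⟨mem_closedBall_zero_iff.2 hcR, hw⟩, ⟨mem_closedBall_zero_iff.2 hchR, hwh⟩⟩
    have hQK : ((b, w), (bh, wh)) ∈ K :=
      ⟨⟨mem_closedBall_zero_iff.2 hb, hw⟩, ⟨mem_closedBall_zero_iff.2 hbh, hwh⟩⟩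
    have hdistPQ : dist (((c, w), (ch, wh)) :
        ((Fin n → ℝ) × (Fin m → ℝ)) × ((Fin n → ℝ) × (Fin m → ℝ))) ((b, w), (bh, wh)) ≤ E := by
      rw [Prod.dist_eq]
      apply max_le
      · rw [Prod.dist_eq]
        apply max_le
        · rw [dist_pi_le_iff hE]
          intro j
          rw [Real.dist_eq]
          rcases le_total (a j) (b j) with h | h
          · simp only [hcdef]; rw [max_eq_right h]; simpa using hE
          · simp only [hcdef]; rw [max_eq_left h]
            have := hu j
            rw [abs_of_nonneg (by linarith)]
            calc a j - b j ≤ max (a j - b j) 0 := le_max_left _ _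
              _ ≤ E := hu j
        · simpa using hE
      · rw [Prod.dist_eq]
        apply max_le
        · rw [dist_pi_le_iff hE]
          intro j
          rw [Real.dist_eq]
          rcases le_total (ah j) (bh j) with h | h
          · simp only [hchdef]; rw [min_eq_left h]
            rw [abs_of_nonpos (by linarith)]
            calc -(ah j - bh j) = bh j - ah j := by ring
              _ ≤ max (bh j - ah j) 0 := le_max_left _ _
              _ ≤ E := hv j
          · simp only [hchdef]; rw [min_eq_right h]; simpa using hE
        · simpa using hE
    have hdd := hLip _ hPK _ hQK
    have hcomp : dist (d c w ch wh i) (d b w bh wh i)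
        ≤ dist (D ((c, w), (ch, wh))) (D ((b, w), (bh, wh))) :=
      dist_le_pi_dist (D ((c, w), (ch, wh))) (D ((b, w), (bh, wh))) i
    have step3 : d c w ch wh i - d b w bh wh i ≤ L * E := by
      have h1 : d c w ch wh i - d b w bh wh i ≤ dist (d c w ch wh i) (d b w bh wh i) := by
        rw [Real.dist_eq]; exact le_abs_self _
      calc d c w ch wh i - d b w bh wh i
          ≤ dist (D ((c, w), (ch, wh))) (D ((b, w), (bh, wh))) := h1.trans hcomp
        _ ≤ L * dist (((c, w), (ch, wh)) :
            ((Fin n → ℝ) × (Fin m → ℝ)) × ((Fin n → ℝ) × (Fin m → ℝ))) ((b, w), (bh, wh)) := hdd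
        _ ≤ L * E := mul_le_mul_of_nonneg_left hdistPQ hL0
    linarith
  -- derivative continuity helper
  have hDcont : Continuous D := hLL.continuous
  have hcont1 : ∀ i : Fin n, ContinuousOn (fun s => d (x s) wl (xh s) wu i) (Set.Icc 0 T) := by
    intro i
    have : ContinuousOn (fun s => D ((x s, wl), (xh s, wu))) (Set.Icc 0 T) :=
      hDcont.comp_continuousOn ((hcx.prodMk continuousOn_const).prodMk
        (hcxh.prodMk continuousOn_const))
    exact (continuous_apply i).comp_continuousOn this
  have hcont2 : ∀ i : Fin n, ContinuousOn (fun s => d (y s) wl (yh s) wu i) (Set.Icc 0 T) := by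
    intro i
    have : ContinuousOn (fun s => D ((y s, wl), (yh s, wu))) (Set.Icc 0 T) :=
      hDcont.comp_continuousOn ((hcy.prodMk continuousOn_const).prodMk
        (hcyh.prodMk continuousOn_const))
    exact (continuous_apply i).comp_continuousOn this
  have hcont3 : ∀ i : Fin n, ContinuousOn (fun s => d (yh s) wu (y s) wl i) (Set.Icc 0 T) := by
    intro i
    have : ContinuousOn (fun s => D ((yh s, wu), (y s, wl))) (Set.Icc 0 T) :=
      hDcont.comp_continuousOn ((hcyh.prodMk continuousOn_const).prodMk
        (hcy.prodMk continuousOn_const))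
    exact (continuous_apply i).comp_continuousOn this
  have hcont4 : ∀ i : Fin n, ContinuousOn (fun s => d (xh s) wu (x s) wl i) (Set.Icc 0 T) := by
    intro i
    have : ContinuousOn (fun s => D ((xh s, wu), (x s, wl))) (Set.Icc 0 T) :=
      hDcont.comp_continuousOn ((hcxh.prodMk continuousOn_const).prodMk
        (hcx.prodMk continuousOn_const))
    exact (continuous_apply i).comp_continuousOn this
  -- the Gronwall-type key inequality
  set C : ℝ := ((n : ℝ) + (n : ℝ)) * L with hCdef
  have hC0 : 0 ≤ C := mul_nonneg (by positivity) hL0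
  have hkey : ∀ t ∈ Set.Icc (0:ℝ) T, ψ t ≤ C * ∫ s in (0:ℝ)..t, ψ s := by
    intro t ht
    have hsubT : Set.Icc (0:ℝ) t ⊆ Set.Icc (0:ℝ) T := Set.Icc_subset_Icc le_rfl ht.2
    have hLψc : ContinuousOn (fun s => L * ψ s) (Set.Icc 0 t) :=
      (continuousOn_const.mul hψc).mono hsubT
    have hLψ0 : ∀ s ∈ Set.Icc (0:ℝ) t, 0 ≤ L * ψ s :=
      fun s _ => mul_nonneg hL0 (hψnn s)
    have hIntnn : 0 ≤ ∫ s in (0:ℝ)..t, L * ψ s :=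
      intervalIntegral.integral_nonneg ht.1 hLψ0
    have hcompu : ∀ i : Fin n, x t i - y t i ≤ ∫ s in (0:ℝ)..t, L * ψ s := by
      intro i
      apply le_integral_of_deriv_le (fun s => x s i - y s i)
        (fun s => d (x s) wl (xh s) wu i - d (y s) wl (yh s) wu i)
        (fun s => L * ψ s) t ht.1
      · intro s hs
        have hs' := hsubT hs
        exact ((hasDerivAt_pi.1 (hx s hs')) i).sub ((hasDerivAt_pi.1 (hy s hs')) i)
      · exact ((hcont1 i).sub (hcont2 i)).mono hsubT
      · exact hLψc
      · exact hLψ0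
      · have := h0.1 i; simp only [sub_nonpos]; exact this
      · intro s hs hws
        have hs' := hsubT hs
        exact hkeyd (x s) (y s) (xh s) (yh s) (hRx s hs') (hRy s hs') (hRxh s hs') (hRyh s hs')
          wl wu hwl hwu (ψ s) (hψnn s) (humax s) (hvmax s) i (by linarith)
    have hcompv : ∀ i : Fin n, yh t i - xh t i ≤ ∫ s in (0:ℝ)..t, L * ψ s := by
      intro i
      apply le_integral_of_deriv_le (fun s => yh s i - xh s i)
        (fun s => d (yh s) wu (y s) wl i - d (xh s) wu (x s) wl i)
        (fun s => L * ψ s) t ht.1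
      · intro s hs
        have hs' := hsubT hs
        exact ((hasDerivAt_pi.1 (hyh s hs')) i).sub ((hasDerivAt_pi.1 (hxh s hs')) i)
      · exact ((hcont3 i).sub (hcont4 i)).mono hsubT
      · exact hLψc
      · exact hLψ0
      · have := h0.2 i; simp only [sub_nonpos]; exact this
      · intro s hs hws
        have hs' := hsubT hs
        exact hkeyd (yh s) (xh s) (y s) (x s) (hRyh s hs') (hRxh s hs') (hRy s hs') (hRx s hs')
          wu wl hwu hwl (ψ s) (hψnn s) (hvmax s) (humax s) i (by linarith)
    have hsum1 : (∑ i, max (x t i - y t i) 0) ≤ (n : ℝ) * ∫ s in (0:ℝ)..t, L * ψ s := by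
      calc (∑ i, max (x t i - y t i) 0)
          ≤ ∑ _i : Fin n, ∫ s in (0:ℝ)..t, L * ψ s :=
            Finset.sum_le_sum (fun i _ => max_le (hcompu i) hIntnn)
        _ = (n : ℝ) * ∫ s in (0:ℝ)..t, L * ψ s := by
            rw [Finset.sum_const, Finset.card_univ, Fintype.card_fin, nsmul_eq_mul]
    have hsum2 : (∑ i, max (yh t i - xh t i) 0) ≤ (n : ℝ) * ∫ s in (0:ℝ)..t, L * ψ s := by
      calc (∑ i, max (yh t i - xh t i) 0)
          ≤ ∑ _i : Fin n, ∫ s in (0:ℝ)..t, L * ψ s :=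
            Finset.sum_le_sum (fun i _ => max_le (hcompv i) hIntnn)
        _ = (n : ℝ) * ∫ s in (0:ℝ)..t, L * ψ s := by
            rw [Finset.sum_const, Finset.card_univ, Fintype.card_fin, nsmul_eq_mul]
    have hmul : (∫ s in (0:ℝ)..t, L * ψ s) = L * ∫ s in (0:ℝ)..t, ψ s :=
      intervalIntegral.integral_const_mul L ψ
    have : ψ t ≤ ((n : ℝ) + (n : ℝ)) * ∫ s in (0:ℝ)..t, L * ψ s := by
      simp only [hψdef]; linarith
    rw [hmul] at this
    calc ψ t ≤ ((n : ℝ) + (n : ℝ)) * (L * ∫ s in (0:ℝ)..t, ψ s) := this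
      _ = C * ∫ s in (0:ℝ)..t, ψ s := by rw [hCdef]; ring
  have hψzero := gronwall_zero_s19 ψ T C hT hC0 hψc (fun t _ => hψnn t) hkey
  intro t ht
  constructor
  · intro i
    have h1 := humax t i
    rw [hψzero t ht] at h1
    have h2 : x t i - y t i ≤ 0 := le_trans (le_max_left _ _) h1
    linarith
  · intro i
    have h1 := hvmax t i
    rw [hψzero t ht] at h1
    have h2 : yh t i - xh t i ≤ 0 := le_trans (le_max_left _ _) h1
    linarith
end
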